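/- There is a polynomial p such that the following holds. For every document d and all sequential vset-automata A1 and A2 such that, with X := Vars(A1) ∩ Vars(A2), A1 is semi-functional for X and A2 is synchronized for X, there exists a sequential vset-automaton A_d with ⟦A_d⟧(d) = ⟦A1 ∖ A2⟧(d) whose total size (number of states plus number of transitions) is at most p(size of A1 + size of A2 + |d| + |Vars(A1) ∪ Vars(A2)|). -/

import Mathlib

namespace Spanners

open scoped Classical

/-! ### Spans and mappings -/

abbrev Span := ℕ × ℕ

abbrev VMapping := ℕ → Option Span

def emptyMapping : VMapping := fun _ => none

def mapDom (μ : VMapping) : Set ℕ := {x | μ x ≠ none}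

/-- Two mappings are compatible if they agree on every common variable. -/
def Compatible (μ1 μ2 : VMapping) : Prop :=
  ∀ x s1 s2, μ1 x = some s1 → μ2 x = some s2 → s1 = s2

def DisjointDom (μ1 μ2 : VMapping) : Prop :=
  ∀ x, μ1 x = none ∨ μ2 x = none

def munion (μ1 μ2 : VMapping) : VMapping := fun x =>
  match μ1 x with
  | some s => some s
  | none => μ2 x

def minsert (x : ℕ) (s : Span) (μ : VMapping) : VMapping :=
  fun y => if y = x then some s else μ y

/-- Natural join of two sets of mappings. -/
def joinSet (S1 S2 : Set VMapping) : Set VMapping :=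
  {μ | ∃ μ1 ∈ S1, ∃ μ2 ∈ S2, Compatible μ1 μ2 ∧ μ = munion μ1 μ2}

/-- Difference of two sets of mappings. -/
def diffSet (S1 S2 : Set VMapping) : Set VMapping :=
  {μ1 | μ1 ∈ S1 ∧ ∀ μ2 ∈ S2, ¬ Compatible μ1 μ2}

/-- Restriction of a mapping to a set of variables. -/
noncomputable def restrictMap (μ : VMapping) (V : Set ℕ) : VMapping :=
  fun x => if x ∈ V then μ x else none

/-- Projection of a set of mappings to a set of variables. -/
def projSet (V : Set ℕ) (S : Set VMapping) : Set VMapping :=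
  {μ' | ∃ μ ∈ S, μ' = restrictMap μ V}

/-! ### Regex formulas -/

inductive RGX (Sig : Type) where
  | empty : RGX Sig
  | eps : RGX Sig
  | letter : Sig → RGX Sig
  | union : RGX Sig → RGX Sig → RGX Sig
  | concat : RGX Sig → RGX Sig → RGX Sig
  | star : RGX Sig → RGX Sig
  | bind : ℕ → RGX Sig → RGX Sig

variable {Sig : Type}

def RGX.vars : RGX Sig → Finset ℕ
  | .empty => ∅
  | .eps => ∅
  | .letter _ => ∅
  | .union a b => a.vars ∪ b.vars
  | .concat a b => a.vars ∪ b.vars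
  | .star a => a.vars
  | .bind x a => insert x a.vars

def RGX.size : RGX Sig → ℕ
  | .empty => 1
  | .eps => 1
  | .letter _ => 1
  | .union a b => a.size + b.size + 1
  | .concat a b => a.size + b.size + 1
  | .star a => a.size + 1
  | .bind _ a => a.size + 1

/-- The schemaless semantics `⟨α⟩(d)`: `RMatch α d i j μ` means `([i,j⟩, μ) ∈ ⟨α⟩(d)`. -/
inductive RMatch : RGX Sig → List Sig → ℕ → ℕ → VMapping → Prop where
  | eps {d : List Sig} {i : ℕ} (h1 : 1 ≤ i) (h2 : i ≤ d.length + 1) :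
      RMatch .eps d i i emptyMapping
  | letter {d : List Sig} {i : ℕ} {σ : Sig} (h1 : 1 ≤ i) (h2 : d[i - 1]? = some σ) :
      RMatch (.letter σ) d i (i + 1) emptyMapping
  | unionL {a b : RGX Sig} {d : List Sig} {i j : ℕ} {μ : VMapping}
      (h : RMatch a d i j μ) : RMatch (.union a b) d i j μ
  | unionR {a b : RGX Sig} {d : List Sig} {i j : ℕ} {μ : VMapping}
      (h : RMatch b d i j μ) : RMatch (.union a b) d i j μ
  | concat {a b : RGX Sig} {d : List Sig} {i k j : ℕ} {μ1 μ2 : VMapping}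
      (h1 : RMatch a d i k μ1) (h2 : RMatch b d k j μ2) (hd : DisjointDom μ1 μ2) :
      RMatch (.concat a b) d i j (munion μ1 μ2)
  | bind {x : ℕ} {a : RGX Sig} {d : List Sig} {i j : ℕ} {μ : VMapping}
      (h : RMatch a d i j μ) (hx : μ x = none) :
      RMatch (.bind x a) d i j (minsert x (i, j) μ)
  | starNil {a : RGX Sig} {d : List Sig} {i : ℕ} (h1 : 1 ≤ i) (h2 : i ≤ d.length + 1) :
      RMatch (.star a) d i i emptyMapping
  | starCons {a : RGX Sig} {d : List Sig} {i k j : ℕ} {μ1 μ2 : VMapping}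
      (h1 : RMatch a d i k μ1) (h2 : RMatch (.star a) d k j μ2) (hd : DisjointDom μ1 μ2) :
      RMatch (.star a) d i j (munion μ1 μ2)

/-- `⟦α⟧(d)`: mappings extracted with the full span. -/
def rgxSem (α : RGX Sig) (d : List Sig) : Set VMapping :=
  {μ | RMatch α d 1 (d.length + 1) μ}

/-- Sequential regex formulas. -/
def RGX.Sequential : RGX Sig → Prop
  | .empty => True
  | .eps => True
  | .letter _ => True
  | .union a b => a.Sequential ∧ b.Sequential
  | .concat a b => a.Sequential ∧ b.Sequential ∧ Disjoint a.vars b.vars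
  | .star a => a.Sequential ∧ a.vars = ∅
  | .bind x a => a.Sequential ∧ x ∉ a.vars

/-- Variable-free words over the alphabet (built from ε, letters and concatenation). -/
inductive RGX.IsWord : RGX Sig → Prop where
  | eps : RGX.IsWord .eps
  | letter (σ : Sig) : RGX.IsWord (.letter σ)
  | concat {a b : RGX Sig} : a.IsWord → b.IsWord → RGX.IsWord (.concat a b)

/-- Functional for a set `V` of variables. -/
inductive FunctionalFor : RGX Sig → Finset ℕ → Prop where
  | word {α : RGX Sig} (h : α.IsWord) : FunctionalFor α ∅
  | union {a b : RGX Sig} {V : Finset ℕ} (ha : FunctionalFor a V) (hb : FunctionalFor b V) :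
      FunctionalFor (.union a b) V
  | concat {a b : RGX Sig} {V : Finset ℕ} (V1 : Finset ℕ) (hsub : V1 ⊆ V)
      (ha : FunctionalFor a V1) (hb : FunctionalFor b (V \ V1)) :
      FunctionalFor (.concat a b) V
  | star {a : RGX Sig} (h : FunctionalFor a ∅) : FunctionalFor (.star a) ∅
  | bind {x : ℕ} {a : RGX Sig} {V : Finset ℕ} (h : FunctionalFor a (V.erase x)) :
      FunctionalFor (.bind x a) V

def RGX.Functional (α : RGX Sig) : Prop := FunctionalFor α α.vars

/-- Disjunctive functional regex formulas: finite disjunctions of functional regex formulas. -/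
inductive DisjFunctional : RGX Sig → Prop where
  | base {γ : RGX Sig} (h : γ.Functional) : DisjFunctional γ
  | union {a b : RGX Sig} (ha : DisjFunctional a) (hb : DisjFunctional b) :
      DisjFunctional (.union a b)

/-- Number of disjuncts of a (disjunctive) regex formula. -/
def countDisjuncts : RGX Sig → ℕ
  | .union a b => countDisjuncts a + countDisjuncts b
  | _ => 1

/-- Disjunction-free regex formulas. -/
def RGX.DisjFree : RGX Sig → Prop
  | .union _ _ => False
  | .concat a b => a.DisjFree ∧ b.DisjFree
  | .star a => a.DisjFree
  | .bind _ a => a.DisjFree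
  | _ => True

/-- `γ` is synchronized for `x`: no subformula `γ1 ∨ γ2` contains `x`. -/
def RGX.SyncFor : RGX Sig → ℕ → Prop
  | .union a b, x => (x ∉ a.vars ∧ x ∉ b.vars) ∧ a.SyncFor x ∧ b.SyncFor x
  | .concat a b, x => a.SyncFor x ∧ b.SyncFor x
  | .star a, x => a.SyncFor x
  | .bind _ a, x => a.SyncFor x
  | _, _ => True

/-- Concatenation of a list of regex formulas. -/
def concatList : List (RGX Sig) → RGX Sig
  | [] => .eps
  | [α] => α
  | α :: rest => .concat α (concatList rest)

/-- Disjunction of a list of regex formulas. -/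
def disjList : List (RGX Sig) → RGX Sig
  | [] => .empty
  | [α] => α
  | α :: rest => .union α (disjList rest)

/-! ### vset-automata -/

inductive VLabel (Sig : Type) where
  | eps : VLabel Sig
  | letter : Sig → VLabel Sig
  | openv : ℕ → VLabel Sig
  | closev : ℕ → VLabel Sig
deriving DecidableEq

structure VA (Sig : Type) [DecidableEq Sig] where
  q0 : ℕ
  F : Finset ℕ
  δ : Finset (ℕ × VLabel Sig × ℕ)

variable [DecidableEq Sig]

/-- The states of a VA: the initial state and all states mentioned in `F` or in transitions. -/
def statesOf (A : VA Sig) : Finset ℕ :=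
  insert A.q0 (A.F ∪ A.δ.image (fun t => t.1) ∪ A.δ.image (fun t => t.2.2))

def labelVars : VLabel Sig → Finset ℕ
  | .openv x => {x}
  | .closev x => {x}
  | _ => ∅

/-- `Vars(A)`: the variables mentioned in the transitions of `A`. -/
def varsOf (A : VA Sig) : Finset ℕ := A.δ.biUnion (fun t => labelVars t.2.1)

/-- Total size of a VA: number of states plus number of transitions. -/
def vaSize (A : VA Sig) : ℕ := (statesOf A).card + A.δ.card

/-- `A.PathFrom p ls q`: a path (run segment) from `p` to `q` with label sequence `ls`. -/
inductive VA.PathFrom (A : VA Sig) : ℕ → List (VLabel Sig) → ℕ → Prop where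
  | nil (q : ℕ) : VA.PathFrom A q [] q
  | cons {p q r : ℕ} {l : VLabel Sig} {ls : List (VLabel Sig)}
      (h : (p, l, q) ∈ A.δ) (htail : VA.PathFrom A q ls r) : VA.PathFrom A p (l :: ls) r

/-- The word (document) read by a sequence of labels. -/
def readWord : List (VLabel Sig) → List Sig :=
  List.filterMap fun l => match l with
    | VLabel.letter σ => some σ
    | _ => none

def isLetterL : VLabel Sig → Bool
  | .letter _ => true
  | _ => false

/-- The current position in the document just before executing the `k`-th label. -/
def posAt (ls : List (VLabel Sig)) (k : ℕ) : ℕ := 1 + (ls.take k).countP isLetterL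

/-- Validity of a run, given by its label sequence. -/
def ValidLabels (ls : List (VLabel Sig)) : Prop :=
  ∀ x : ℕ,
    ls.count (VLabel.openv x) ≤ 1 ∧
    ls.count (VLabel.closev x) ≤ 1 ∧
    ((VLabel.openv x) ∈ ls ↔ (VLabel.closev x) ∈ ls) ∧
    ∀ i j : ℕ, ls[i]? = some (VLabel.openv x) → ls[j]? = some (VLabel.closev x) →
      posAt ls i ≤ posAt ls j

/-- The mapping `μ_ρ` extracted from a (valid accepting) run with label sequence `ls`. -/
def runMapping (ls : List (VLabel Sig)) : VMapping := fun x =>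
  if (VLabel.openv x) ∈ ls then
    some (posAt ls (ls.idxOf (VLabel.openv x)), posAt ls (ls.idxOf (VLabel.closev x)))
  else none

/-- `ls` is the label sequence of an accepting run of `A`. -/
def AcceptsWith (A : VA Sig) (ls : List (VLabel Sig)) : Prop :=
  ∃ qf, VA.PathFrom A A.q0 ls qf ∧ qf ∈ A.F

/-- `⟦A⟧(d)`. -/
def vaSem (A : VA Sig) (d : List Sig) : Set VMapping :=
  {μ | ∃ ls, AcceptsWith A ls ∧ readWord ls = d ∧ ValidLabels ls ∧ μ = runMapping ls}

/-- A VA is sequential if all of its accepting runs are valid. -/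
def VA.Sequential (A : VA Sig) : Prop := ∀ ls, AcceptsWith A ls → ValidLabels ls

/-- A run from the initial state to `q` that is a prefix of an accepting run. -/
def PrefixRun (A : VA Sig) (ls : List (VLabel Sig)) (q : ℕ) : Prop :=
  VA.PathFrom A A.q0 ls q ∧ ∃ ls' qf, VA.PathFrom A q ls' qf ∧ qf ∈ A.F

/-- `A` is semi-functional for the variable `x`: no state has extended configuration `d`. -/
def SemiFunctionalFor (A : VA Sig) (x : ℕ) : Prop :=
  ¬ ∃ q ls1 ls2, PrefixRun A ls1 q ∧ PrefixRun A ls2 q ∧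
      (VLabel.closev x) ∈ ls1 ∧ (VLabel.openv x) ∉ ls2

def SemiFunctionalForSet (A : VA Sig) (X : Finset ℕ) : Prop :=
  ∀ x ∈ X, SemiFunctionalFor A x

/-- Functional VA: sequential, and every accepting run opens and closes every variable. -/
def FunctionalVA (A : VA Sig) : Prop :=
  A.Sequential ∧ ∀ ls, AcceptsWith A ls → ∀ x ∈ varsOf A,
    (VLabel.openv x) ∈ ls ∧ (VLabel.closev x) ∈ ls

/-- `l` has a unique target state in `A`. -/
def UniqueTarget (A : VA Sig) (l : VLabel Sig) : Prop :=
  ∃ qt : ℕ, ∀ p q : ℕ, (p, l, q) ∈ A.δ → q = qt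

/-- `A` is synchronized for the variable `x`. -/
def SyncForVA (A : VA Sig) (x : ℕ) : Prop :=
  UniqueTarget A (VLabel.openv x) ∧ UniqueTarget A (VLabel.closev x) ∧
    ((∀ ls, AcceptsWith A ls → (VLabel.openv x) ∈ ls ∧ (VLabel.closev x) ∈ ls) ∨
     (∀ ls, AcceptsWith A ls → (VLabel.openv x) ∉ ls ∧ (VLabel.closev x) ∉ ls))

/-- `A` is the disjunctive functional VA with functional components `parts`. -/
def DisjFunctionalVAWith (A : VA Sig) (parts : List (VA Sig)) : Prop :=
  (∀ B ∈ parts, FunctionalVA B) ∧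
  (parts.Pairwise fun B C => Disjoint (statesOf B) (statesOf C)) ∧
  (∀ B ∈ parts, A.q0 ∉ statesOf B) ∧
  A.F = parts.foldr (fun B s => B.F ∪ s) (∅ : Finset ℕ) ∧
  A.δ = (parts.map (fun B => (A.q0, (VLabel.eps : VLabel Sig), B.q0))).toFinset
        ∪ parts.foldr (fun B s => B.δ ∪ s) (∅ : Finset (ℕ × VLabel Sig × ℕ))

def DisjFunctionalVA (A : VA Sig) : Prop := ∃ parts, DisjFunctionalVAWith A parts

/-! ### 3CNF formulas -/

/-- A 3CNF clause over `n` Boolean variables: a triple of literals; `(i, true)` is `xᵢ`,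
`(i, false)` is `¬xᵢ`. -/
def Clause3 (n : ℕ) : Type := (Fin n × Bool) × (Fin n × Bool) × (Fin n × Bool)

def litsOf {n : ℕ} (c : Clause3 n) : List (Fin n × Bool) := [c.1, c.2.1, c.2.2]

def clauseSat {n : ℕ} (τ : Fin n → Bool) (c : Clause3 n) : Prop :=
  ∃ l ∈ litsOf c, τ l.1 = l.2

def Sat3 {n m : ℕ} (φ : Fin m → Clause3 n) : Prop :=
  ∃ τ : Fin n → Bool, ∀ j, clauseSat τ (φ j)

end Spanners


namespace Spanners
open scoped Classical
variable {Sig : Type} [DecidableEq Sig]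
set_option linter.unusedSectionVars false
set_option maxHeartbeats 1000000

-- ### utilities

theorem pathFrom_append {A : VA Sig} {p q r : ℕ} {u v : List (VLabel Sig)}
    (h1 : A.PathFrom p u q) (h2 : A.PathFrom q v r) : A.PathFrom p (u ++ v) r := by
  induction h1 with
  | nil => simpa
  | cons h htail ih => exact .cons h (ih h2)

theorem pathFrom_split {A : VA Sig} {p r : ℕ} {u v : List (VLabel Sig)}
    (h : A.PathFrom p (u ++ v) r) : ∃ q, A.PathFrom p u q ∧ A.PathFrom q v r := by
  induction u generalizing p with
  | nil => exact ⟨p, .nil p, h⟩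
  | cons l u ih =>
    cases h with
    | cons h htail =>
      obtain ⟨q, h1, h2⟩ := ih htail
      exact ⟨q, .cons h h1, h2⟩

theorem readWord_append (u v : List (VLabel Sig)) :
    readWord (u ++ v) = readWord u ++ readWord v := by
  simp [readWord, List.filterMap_append]

theorem readWord_length (u : List (VLabel Sig)) :
    (readWord u).length = u.countP isLetterL := by
  induction u with
  | nil => rfl
  | cons l u ih =>
    cases l <;> simp [readWord, isLetterL, List.countP_cons] at * <;> omega

theorem posAt_append_left {u : List (VLabel Sig)} (v : List (VLabel Sig)) {k : ℕ}
    (hk : k ≤ u.length) : posAt (u ++ v) k = posAt u k := by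
  unfold posAt
  rw [List.take_append, Nat.sub_eq_zero_of_le hk]
  simp

theorem posAt_append_right (u v : List (VLabel Sig)) (k : ℕ) :
    posAt (u ++ v) (u.length + k) = u.countP isLetterL + posAt v k := by
  unfold posAt
  rw [List.take_append]
  simp [List.countP_append, List.take_of_length_le (Nat.le_add_right u.length k)]
  omega

def evpos (ls : List (VLabel Sig)) (l : VLabel Sig) : ℕ := posAt ls (ls.idxOf l)

theorem indexOf_append_left {u : List (VLabel Sig)} (v : List (VLabel Sig))
    {l : VLabel Sig} (h : l ∈ u) : (u ++ v).idxOf l = u.idxOf l := by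
  induction u with
  | nil => simp at h
  | cons a u ih =>
    by_cases ha : a = l
    · subst ha; simp [List.idxOf_cons_self]
    · have : l ∈ u := by
        rcases List.mem_cons.1 h with h' | h'
        · exact absurd h'.symm ha
        · exact h'
      have hba : (a == l) = false := by simpa using ha
      simp [List.idxOf_cons, hba, ih this]

theorem indexOf_append_right {u : List (VLabel Sig)} (v : List (VLabel Sig))
    {l : VLabel Sig} (h : l ∉ u) : (u ++ v).idxOf l = u.length + v.idxOf l := by
  induction u with
  | nil => simp
  | cons a u ih =>
    have ha : a ≠ l := by rintro rfl; exact h (by simp)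
    have h' : l ∉ u := fun hh => h (by simp [hh])
    have hba : (a == l) = false := by simpa using ha
    simp [List.idxOf_cons, hba, ih h']
    omega

theorem evpos_append_left {u : List (VLabel Sig)} (v : List (VLabel Sig))
    {l : VLabel Sig} (h : l ∈ u) : evpos (u ++ v) l = evpos u l := by
  unfold evpos
  rw [indexOf_append_left v h]
  exact posAt_append_left v (le_of_lt (List.idxOf_lt_length_iff.2 h))

theorem evpos_append_right {u : List (VLabel Sig)} (v : List (VLabel Sig))
    {l : VLabel Sig} (h : l ∉ u) :
    evpos (u ++ v) l = u.countP isLetterL + evpos v l := by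
  unfold evpos
  rw [indexOf_append_right v h, posAt_append_right]

theorem evpos_of_split {ls a b : List (VLabel Sig)} {l : VLabel Sig}
    (h : ls = a ++ l :: b) (hna : l ∉ a) :
    evpos ls l = 1 + a.countP isLetterL := by
  subst h
  rw [evpos_append_right _ hna]
  simp [evpos, posAt]
  omega


-- ### product automaton machinery

inductive Trace (A : VA Sig) (f : ℕ → ℕ × VLabel Sig × ℕ → ℕ) :
    ℕ → ℕ → List (VLabel Sig) → ℕ → ℕ → Prop where
  | nil (q s : ℕ) : Trace A f q s [] q s
  | cons {q s q' r s' : ℕ} {l : VLabel Sig} {ls : List (VLabel Sig)}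
      (h : (q, l, q') ∈ A.δ) (ht : Trace A f q' (f s (q, l, q')) ls r s') :
      Trace A f q s (l :: ls) r s'

/-- The product of `A` with a deterministic checker. -/
noncomputable def prodVA (A : VA Sig) (f : ℕ → ℕ × VLabel Sig × ℕ → ℕ) (s0 : ℕ)
    (SF : Finset ℕ) (Acc : ℕ → ℕ → Prop) : VA Sig where
  q0 := Nat.pair A.q0 s0
  F := ((A.F ×ˢ SF).filter (fun p : ℕ × ℕ => Acc p.1 p.2)).image (fun p : ℕ × ℕ => Nat.pair p.1 p.2)
  δ := (A.δ ×ˢ SF).image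
    (fun t => (Nat.pair t.1.1 t.2, t.1.2.1, Nat.pair t.1.2.2 (f t.2 t.1)))

variable {A : VA Sig} {f : ℕ → ℕ × VLabel Sig × ℕ → ℕ} {s0 : ℕ} {SF : Finset ℕ}
  {Acc : ℕ → ℕ → Prop}

theorem Trace.path {q s r s' : ℕ} {ls : List (VLabel Sig)}
    (h : Trace A f q s ls r s') : A.PathFrom q ls r := by
  induction h with
  | nil => exact .nil _
  | cons h ht ih => exact .cons h ih

theorem path_trace {q r : ℕ} {ls : List (VLabel Sig)} (h : A.PathFrom q ls r) :
    ∀ s, ∃ s', Trace A f q s ls r s' := by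
  induction h with
  | nil => exact fun s => ⟨s, .nil _ _⟩
  | cons h htail ih =>
    intro s
    obtain ⟨s', ht⟩ := ih (f s (_, _, _))
    exact ⟨s', .cons h ht⟩

theorem Trace.mem_SF (hcl : ∀ s ∈ SF, ∀ t ∈ A.δ, f s t ∈ SF)
    {q s r s' : ℕ} {ls : List (VLabel Sig)}
    (h : Trace A f q s ls r s') (hs : s ∈ SF) : s' ∈ SF := by
  induction h with
  | nil => exact hs
  | cons h ht ih => exact ih (hcl _ hs _ h)

theorem prod_path_down {q s R : ℕ} {ls : List (VLabel Sig)}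
    (h : (prodVA A f s0 SF Acc).PathFrom (Nat.pair q s) ls R) :
    ∃ r s', R = Nat.pair r s' ∧ Trace A f q s ls r s' := by
  generalize hQ : Nat.pair q s = Q at h
  induction h generalizing q s with
  | nil => exact ⟨q, s, hQ.symm, .nil _ _⟩
  | @cons p pq pr l pls h htail ih =>
    subst hQ
    simp only [prodVA, Finset.mem_image, Finset.mem_product] at h
    obtain ⟨⟨⟨a, b, c⟩, ts⟩, ⟨htA, htS⟩, heq⟩ := h
    have e1 : Nat.pair a ts = Nat.pair q s := congrArg Prod.fst heq
    have e2 : b = l := congrArg (fun z => z.2.1) heq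
    have e3 : Nat.pair c (f ts (a, b, c)) = pq := congrArg (fun z => z.2.2) heq
    obtain ⟨ha, hts⟩ := Nat.pair_eq_pair.1 e1
    subst ha hts e2
    obtain ⟨r, s', hR, ht⟩ := ih e3
    exact ⟨r, s', hR, .cons htA ht⟩

theorem trace_prod_path (hcl : ∀ s ∈ SF, ∀ t ∈ A.δ, f s t ∈ SF)
    {q s r s' : ℕ} {ls : List (VLabel Sig)}
    (h : Trace A f q s ls r s') (hs : s ∈ SF) :
    (prodVA A f s0 SF Acc).PathFrom (Nat.pair q s) ls (Nat.pair r s') := by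
  induction h with
  | nil => exact .nil _
  | @cons q s q' r s' l ls h ht ih =>
    refine .cons ?_ (ih (hcl _ hs _ h))
    simp only [prodVA, Finset.mem_image, Finset.mem_product]
    exact ⟨((q, l, q'), s), ⟨h, hs⟩, rfl⟩

theorem prod_accepts (hcl : ∀ s ∈ SF, ∀ t ∈ A.δ, f s t ∈ SF) (hs0 : s0 ∈ SF)
    {ls : List (VLabel Sig)} :
    AcceptsWith (prodVA A f s0 SF Acc) ls ↔
      ∃ r s', Trace A f A.q0 s0 ls r s' ∧ r ∈ A.F ∧ Acc r s' := by
  constructor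
  · rintro ⟨qf, hpath, hqf⟩
    obtain ⟨r, s', rfl, ht⟩ := prod_path_down hpath
    simp only [prodVA, Finset.mem_image, Finset.mem_filter, Finset.mem_product] at hqf
    obtain ⟨⟨a, b⟩, ⟨⟨ha, hb⟩, hacc⟩, heq⟩ := hqf
    obtain ⟨h1, h2⟩ := Nat.pair_eq_pair.1 heq
    subst h1 h2
    exact ⟨a, b, ht, ha, hacc⟩
  · rintro ⟨r, s', ht, hr, hacc⟩
    refine ⟨Nat.pair r s', trace_prod_path hcl ht hs0, ?_⟩
    simp only [prodVA, Finset.mem_image, Finset.mem_filter, Finset.mem_product]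
    exact ⟨(r, s'), ⟨⟨hr, ht.mem_SF hcl hs0⟩, hacc⟩, rfl⟩

theorem prod_sequential (hcl : ∀ s ∈ SF, ∀ t ∈ A.δ, f s t ∈ SF) (hs0 : s0 ∈ SF)
    (hA : A.Sequential) : (prodVA A f s0 SF Acc).Sequential := by
  intro ls hacc
  obtain ⟨r, s', ht, hr, -⟩ := (prod_accepts hcl hs0).1 hacc
  exact hA ls ⟨r, ht.path, hr⟩

theorem prod_vaSem (hcl : ∀ s ∈ SF, ∀ t ∈ A.δ, f s t ∈ SF) (hs0 : s0 ∈ SF)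
    (d : List Sig) :
    vaSem (prodVA A f s0 SF Acc) d =
      {μ | ∃ ls r s', Trace A f A.q0 s0 ls r s' ∧ r ∈ A.F ∧ Acc r s' ∧
        readWord ls = d ∧ ValidLabels ls ∧ μ = runMapping ls} := by
  ext μ
  simp only [vaSem, Set.mem_setOf_eq, prod_accepts (Acc := Acc) hcl hs0]
  constructor
  · rintro ⟨ls, ⟨r, s', h1, h2, h3⟩, h4, h5, h6⟩
    exact ⟨ls, r, s', h1, h2, h3, h4, h5, h6⟩
  · rintro ⟨ls, r, s', h1, h2, h3, h4, h5, h6⟩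
    exact ⟨ls, ⟨r, s', h1, h2, h3⟩, h4, h5, h6⟩

theorem prod_size :
    vaSize (prodVA A f s0 SF Acc) ≤ 1 + 4 * vaSize A * (SF.card + 1) := by
  classical
  have hF : (prodVA A f s0 SF Acc).F.card ≤ A.F.card * SF.card := by
    have h1 : (prodVA A f s0 SF Acc).F.card ≤ (A.F ×ˢ SF).card := by
      simp only [prodVA]
      exact le_trans Finset.card_image_le (Finset.card_filter_le _ _)
    simpa [Finset.card_product] using h1
  have hδ : (prodVA A f s0 SF Acc).δ.card ≤ A.δ.card * SF.card := by
    have h1 : (prodVA A f s0 SF Acc).δ.card ≤ (A.δ ×ˢ SF).card := by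
      simp only [prodVA]
      exact Finset.card_image_le
    simpa [Finset.card_product] using h1
  have hi1 : ((prodVA A f s0 SF Acc).δ.image (fun t => t.1)).card ≤ A.δ.card * SF.card :=
    le_trans Finset.card_image_le hδ
  have hi2 : ((prodVA A f s0 SF Acc).δ.image (fun t => t.2.2)).card ≤ A.δ.card * SF.card :=
    le_trans Finset.card_image_le hδ
  have hins := Finset.card_insert_le (prodVA A f s0 SF Acc).q0
    ((prodVA A f s0 SF Acc).F ∪ (prodVA A f s0 SF Acc).δ.image (fun t => t.1) ∪
      (prodVA A f s0 SF Acc).δ.image (fun t => t.2.2))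
  have hu1 := Finset.card_union_le
    ((prodVA A f s0 SF Acc).F ∪ (prodVA A f s0 SF Acc).δ.image (fun t => t.1))
    ((prodVA A f s0 SF Acc).δ.image (fun t => t.2.2))
  have hu2 := Finset.card_union_le (prodVA A f s0 SF Acc).F
    ((prodVA A f s0 SF Acc).δ.image (fun t => t.1))
  have hFA : A.F.card ≤ vaSize A := by
    have h1 : A.F ⊆ statesOf A := by
      intro x hx
      unfold statesOf
      exact Finset.mem_insert_of_mem (Finset.mem_union_left _ (Finset.mem_union_left _ hx))
    have := Finset.card_le_card h1
    unfold vaSize; omega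
  have hdA : A.δ.card ≤ vaSize A := by unfold vaSize; omega
  have m1 : A.F.card * SF.card ≤ vaSize A * SF.card := Nat.mul_le_mul hFA (le_refl _)
  have m2 : A.δ.card * SF.card ≤ vaSize A * SF.card := Nat.mul_le_mul hdA (le_refl _)
  have m4 : vaSize A * SF.card ≤ vaSize A * (SF.card + 1) :=
    Nat.mul_le_mul (le_refl _) (Nat.le_succ _)
  have massoc : 4 * vaSize A * (SF.card + 1) = 4 * (vaSize A * (SF.card + 1)) := by ring
  unfold vaSize statesOf at *
  omega

-- ### the core construction

section Core

variable (A1 A2 : VA Sig) (d : List Sig)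

/-- Every accepting run of `A2` opens `x`. -/
def UsedAll (x : ℕ) : Prop := ∀ ls, AcceptsWith A2 ls → (VLabel.openv x) ∈ ls

/-- The common variables that are opened by every accepting run of `A2`. -/
noncomputable def Yset : Finset ℕ := (varsOf A1 ∩ varsOf A2).filter (UsedAll A2)

/-- Status: some prefix run of `A1` to `q` opens `x`. -/
def OpSt (q x : ℕ) : Prop := ∃ ls, PrefixRun A1 ls q ∧ (VLabel.openv x) ∈ ls

/-- Status: some prefix run of `A1` to `q` closes `x`. -/
def ClSt (q x : ℕ) : Prop := ∃ ls, PrefixRun A1 ls q ∧ (VLabel.closev x) ∈ ls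

/-- The unique target state of a variable operation of `A2`. -/
noncomputable def utgt (l : VLabel Sig) : ℕ :=
  if h : ∃ qt : ℕ, ∀ p q : ℕ, (p, l, q) ∈ A2.δ → q = qt then h.choose else 0

/-- The set of `Y`-events performed between a state `qs` (at the previous letter) and the
current state `q`, read off from the statuses. -/
noncomputable def eventSet (qs q : ℕ) : Finset (VLabel Sig) :=
  ((Yset A1 A2).filter (fun x => ¬ OpSt A1 qs x ∧ OpSt A1 q x)).image VLabel.openv ∪
  ((Yset A1 A2).filter (fun x => ¬ ClSt A1 qs x ∧ ClSt A1 q x)).image VLabel.closev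

/-- Some accepting state of `A2` is reachable from `q`. -/
def COany (q : ℕ) : Prop := ∃ ls qf, A2.PathFrom q ls qf ∧ qf ∈ A2.F

/-- Feasibility of the group `E` of events at letter-count `c`, entered at the point `w`,
with exit event `e`. -/
def GE (w : ℕ × ℕ) (E : Finset (VLabel Sig)) (c : ℕ) (e : VLabel Sig) : Prop :=
  ∃ sa sb, A2.PathFrom w.1 (sa ++ sb ++ [e]) (utgt A2 e) ∧
    readWord sa = ((d.drop w.2).take (c - w.2)) ∧
    (∀ l ∈ sb, isLetterL l = false) ∧
    (∀ e' ∈ E, e' = e ∨ e' ∈ sb)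

/-- Feasibility of the final group `E` together with acceptance of `A2`. -/
def FINA (w : ℕ × ℕ) (E : Finset (VLabel Sig)) : Prop :=
  ∃ sa sb qf, A2.PathFrom w.1 (sa ++ sb) qf ∧ qf ∈ A2.F ∧
    readWord sa = d.drop w.2 ∧ (∀ l ∈ sb, isLetterL l = false) ∧ (∀ e' ∈ E, e' ∈ sb)

/-- One checker step, processing the group between states `qs` and `q` at letter-count `c`.
Dead is `0`; otherwise `w = 1 + Nat.pair q2 c2`. -/
noncomputable def gstep (c qs q w : ℕ) : ℕ :=
  if w = 0 then 0 else
  if eventSet A1 A2 qs q = ∅ then w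
  else if h : ∃ e ∈ eventSet A1 A2 qs q,
      GE A2 d (Nat.unpair (w - 1)) (eventSet A1 A2 qs q) c e ∧ COany A2 (utgt A2 e) then
    1 + Nat.pair (utgt A2 h.choose) c
  else 0

/-- The checker's transition function. A checker state is `Nat.pair c (Nat.pair qs w)`. -/
noncomputable def chk : ℕ → ℕ × VLabel Sig × ℕ → ℕ := fun s t =>
  match t.2.1 with
  | VLabel.letter _ =>
      Nat.pair (min ((Nat.unpair s).1 + 1) d.length)
        (Nat.pair t.2.2
          (gstep A1 A2 d (Nat.unpair s).1 (Nat.unpair (Nat.unpair s).2).1 t.1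
            (Nat.unpair (Nat.unpair s).2).2))
  | _ => s

noncomputable def s0chk : ℕ := Nat.pair 0 (Nat.pair A1.q0 (1 + Nat.pair A2.q0 0))

noncomputable def wSet : Finset ℕ :=
  insert 0 ((statesOf A2 ×ˢ Finset.range (d.length + 1)).image
    (fun p : ℕ × ℕ => 1 + Nat.pair p.1 p.2))

noncomputable def SFchk : Finset ℕ :=
  ((Finset.range (d.length + 1)) ×ˢ (statesOf A1 ×ˢ wSet A2 d)).image
    (fun t : ℕ × ℕ × ℕ => Nat.pair t.1 (Nat.pair t.2.1 t.2.2))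

/-- The final acceptance test of the checker: the run is *bad* (has a compatible companion
in `A2`) iff the trajectory survived and the final group passes. -/
def AccBad (r s : ℕ) : Prop :=
  (Nat.unpair (Nat.unpair s).2).2 ≠ 0 ∧
  FINA A2 d (Nat.unpair ((Nat.unpair (Nat.unpair s).2).2 - 1))
    (eventSet A1 A2 (Nat.unpair (Nat.unpair s).2).1 r)

theorem pathFrom_last_mem {A : VA Sig} {p q : ℕ} {ls : List (VLabel Sig)}
    (h : A.PathFrom p ls q) (hne : ls ≠ []) : q ∈ A.δ.image (fun t => t.2.2) := by
  induction h with
  | nil => exact absurd rfl hne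
  | @cons p' q' r' l ls' h htail ih =>
    cases ls' with
    | nil => cases htail; exact Finset.mem_image.2 ⟨_, h, rfl⟩
    | cons l2 ls2 => exact ih (by simp)

theorem target_mem_statesOf {A : VA Sig} {p q : ℕ} {l : VLabel Sig}
    (h : (p, l, q) ∈ A.δ) : q ∈ statesOf A := by
  unfold statesOf
  exact Finset.mem_insert_of_mem (Finset.mem_union_right _ (Finset.mem_image.2 ⟨_, h, rfl⟩))

theorem mem_statesOf_of_image {A : VA Sig} {q : ℕ}
    (h : q ∈ A.δ.image (fun t => t.2.2)) : q ∈ statesOf A := by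
  unfold statesOf
  exact Finset.mem_insert_of_mem (Finset.mem_union_right _ h)

theorem chk_closure : ∀ s ∈ SFchk A1 A2 d, ∀ t ∈ A1.δ, chk A1 A2 d s t ∈ SFchk A1 A2 d := by
  rintro s hs ⟨p, l, q⟩ ht
  rcases l with - | σ | x | x
  · exact hs
  case letter =>
    simp only [SFchk, Finset.mem_image, Finset.mem_product, Finset.mem_range] at hs
    obtain ⟨⟨c, qs, w⟩, ⟨hc, hqs, hw⟩, rfl⟩ := hs
    simp only [chk, Nat.unpair_pair]
    have hq : q ∈ statesOf A1 := target_mem_statesOf ht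
    have hwnew : gstep A1 A2 d c qs p w ∈ wSet A2 d := by
      unfold gstep
      split
      · exact Finset.mem_insert_self _ _
      · split
        · exact hw
        · split
          case isTrue h =>
            refine Finset.mem_insert_of_mem (Finset.mem_image.2 ⟨(utgt A2 h.choose, c), ?_, rfl⟩)
            refine Finset.mem_product.2 ⟨?_, Finset.mem_range.2 hc⟩
            obtain ⟨hmem, ⟨sa, sb, hpath, -, -, -⟩, -⟩ := h.choose_spec
            exact mem_statesOf_of_image (pathFrom_last_mem hpath (by simp))
          case isFalse => exact Finset.mem_insert_self _ _
    simp only [SFchk, Finset.mem_image, Finset.mem_product, Finset.mem_range]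
    exact ⟨(min (c + 1) d.length, q, gstep A1 A2 d c qs p w),
      ⟨by omega, hq, hwnew⟩, rfl⟩
  · exact hs
  · exact hs

theorem s0chk_mem (h0 : A1.q0 ∈ statesOf A1) : s0chk A1 A2 ∈ SFchk A1 A2 d := by
  simp only [SFchk, s0chk, Finset.mem_image, Finset.mem_product, Finset.mem_range]
  refine ⟨(0, A1.q0, 1 + Nat.pair A2.q0 0), ⟨by omega, h0, ?_⟩, rfl⟩
  unfold wSet
  refine Finset.mem_insert_of_mem (Finset.mem_image.2 ⟨(A2.q0, 0), ?_, rfl⟩)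
  refine Finset.mem_product.2 ⟨?_, by simp⟩
  unfold statesOf
  exact Finset.mem_insert_self _ _

-- ### small helpers

theorem pathFrom_single {A : VA Sig} {p q : ℕ} {l : VLabel Sig} (h : (p, l, q) ∈ A.δ) :
    A.PathFrom p [l] q := .cons h (.nil q)

theorem mem_varsOf_of_mem_path {A : VA Sig} {p q x : ℕ} {ls : List (VLabel Sig)}
    (h : A.PathFrom p ls q) {l : VLabel Sig} (hl : l ∈ ls)
    (hx : x ∈ labelVars l) : x ∈ varsOf A := by
  induction h with
  | nil => simp at hl
  | @cons p' q' r' l' ls' ht htail ih =>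
    rcases List.mem_cons.1 hl with rfl | hl'
    · exact Finset.mem_biUnion.2 ⟨(p', l, q'), ht, hx⟩
    · exact ih hl'

theorem countP_eq_zero_of_all {l : List (VLabel Sig)} (h : ∀ x ∈ l, isLetterL x = false) :
    l.countP isLetterL = 0 := by
  rw [List.countP_eq_zero]
  intro a ha
  simp [h a ha]

theorem readWord_eq_nil_of_letterfree {l : List (VLabel Sig)}
    (h : ∀ x ∈ l, isLetterL x = false) : readWord l = [] := by
  induction l with
  | nil => rfl
  | cons a l ih =>
    have ha := h a (by simp)
    have hrest := ih (fun x hx => h x (by simp [hx]))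
    cases a <;> simp_all [readWord, isLetterL]

theorem readWord_countP (u : List (VLabel Sig)) :
    (readWord u).length = u.countP isLetterL := readWord_length u

/-- An occurrence of `l` in `v` preceded by exactly `k` letters. -/
def Occ (v : List (VLabel Sig)) (l : VLabel Sig) (k : ℕ) : Prop :=
  ∃ a b, v = a ++ l :: b ∧ a.countP isLetterL = k

theorem Occ.mem {v : List (VLabel Sig)} {l : VLabel Sig} {k : ℕ} (h : Occ v l k) : l ∈ v := by
  obtain ⟨a, b, rfl, -⟩ := h
  simp

theorem Occ.append_right {v : List (VLabel Sig)} {l : VLabel Sig} {k : ℕ}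
    (h : Occ v l k) (w : List (VLabel Sig)) : Occ (v ++ w) l k := by
  obtain ⟨a, b, rfl, hk⟩ := h
  exact ⟨a, b ++ w, by simp, hk⟩

theorem Occ.append_left {v : List (VLabel Sig)} {l : VLabel Sig} {k : ℕ}
    (h : Occ v l k) (w : List (VLabel Sig)) :
    Occ (w ++ v) l (w.countP isLetterL + k) := by
  obtain ⟨a, b, rfl, hk⟩ := h
  exact ⟨w ++ a, b, by simp, by simp [List.countP_append, hk]⟩

theorem count_pos_of_mem {v : List (VLabel Sig)} {l : VLabel Sig} (h : l ∈ v) :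
    1 ≤ v.count l := List.one_le_count_iff.2 h

theorem not_mem_of_count_le_one {a b : List (VLabel Sig)} {l : VLabel Sig}
    (h : (a ++ l :: b).count l ≤ 1) : l ∉ a ∧ l ∉ b := by
  rw [List.count_append, List.count_cons_self] at h
  constructor
  · intro hm; have := count_pos_of_mem hm; omega
  · intro hm; have := count_pos_of_mem (l := l) hm; omega

/-- With at most one occurrence, the designated occurrence computes `evpos`. -/
theorem occ_evpos {v : List (VLabel Sig)} {l : VLabel Sig} {k : ℕ}
    (hocc : Occ v l k) (hcount : v.count l ≤ 1) : evpos v l = 1 + k := by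
  obtain ⟨a, b, rfl, hk⟩ := hocc
  have hna := (not_mem_of_count_le_one hcount).1
  rw [evpos_of_split rfl hna, hk]

/-- Conversely, a member of a list gives an `Occ` at its `evpos`. -/
theorem mem_occ {v : List (VLabel Sig)} {l : VLabel Sig} (h : l ∈ v) :
    Occ v l (evpos v l - 1) ∧ 1 ≤ evpos v l := by
  induction v with
  | nil => simp at h
  | cons a v ih =>
    by_cases hal : a = l
    · subst hal
      refine ⟨⟨[], v, rfl, ?_⟩, ?_⟩ <;> simp [evpos, posAt, List.idxOf_cons_self]
    · have hmem : l ∈ v := by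
        rcases List.mem_cons.1 h with h' | h'
        · exact absurd h'.symm hal
        · exact h'
      obtain ⟨⟨a1, b1, hv, hk⟩, h1⟩ := ih hmem
      have hba : (a == l) = false := by simpa using hal
      have hidx : (a :: v).idxOf l = v.idxOf l + 1 := by
        simp [List.idxOf_cons, hba]
      have hev : evpos (a :: v) l =
          (if isLetterL a = true then 1 else 0) + evpos v l := by
        by_cases hA : isLetterL a = true <;>
          simp [evpos, hidx, posAt, List.take_succ_cons, List.countP_cons, hA] <;> omega
      refine ⟨⟨a :: a1, b1, by simp [hv], ?_⟩, by omega⟩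
      by_cases hA : isLetterL a = true <;>
        simp [List.countP_cons, hA, hk, hev] <;> omega

theorem concat_inj' {u w : List (VLabel Sig)} {x y : VLabel Sig}
    (h : u ++ [x] = w ++ [y]) : u = w ∧ x = y := by
  have h1 := congrArg List.reverse h
  simp only [List.reverse_append, List.reverse_singleton, List.singleton_append] at h1
  obtain ⟨h2, h3⟩ := List.cons.injEq .. ▸ h1
  exact ⟨List.reverse_injective h3, h2⟩

/-- Split any list into a prefix and a letter-free suffix containing everything that
comes after the last letter. -/
theorem split_letters (v : List (VLabel Sig)) :
    ∃ sa sb, v = sa ++ sb ∧ (∀ l ∈ sb, isLetterL l = false) ∧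
      sa.countP isLetterL = v.countP isLetterL ∧
      ∀ l k, Occ v l k → k = v.countP isLetterL → isLetterL l = false → l ∈ sb := by
  induction v using List.reverseRecOn with
  | nil => exact ⟨[], [], rfl, by simp, rfl, by rintro l k ⟨a, b, h, -⟩ - -; simp at h⟩
  | append_singleton v x ih =>
    by_cases hx : isLetterL x = true
    · refine ⟨v ++ [x], [], by simp, by simp, rfl, ?_⟩
      rintro l k ⟨a, b, hab, hk⟩ hkv hl
      rcases b.eq_nil_or_concat with rfl | ⟨b', y, rfl⟩
      · obtain ⟨rfl, rfl⟩ := concat_inj' hab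
        rw [hx] at hl; simp at hl
      · rw [List.concat_eq_append] at hab
        have h3 : v ++ [x] = (a ++ l :: b') ++ [y] := by rw [hab]; simp
        obtain ⟨h2, rfl⟩ := concat_inj' h3
        exfalso
        have hcv : v.countP isLetterL =
            a.countP isLetterL + (l :: b').countP isLetterL := by
          rw [h2]; simp [List.countP_append]
        have hvx : (v ++ [x]).countP isLetterL = v.countP isLetterL + 1 := by
          simp [List.countP_append, hx]
        omega
    · obtain ⟨sa, sb, rfl, hsb, hcount, hocc⟩ := ih
      have hx' : isLetterL x = false := by simpa using hx
      refine ⟨sa, sb ++ [x], by simp, ?_, ?_, ?_⟩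
      · intro l hl
        rcases List.mem_append.1 hl with h | h
        · exact hsb l h
        · simp at h; subst h; exact hx'
      · have h0 : sb.countP isLetterL = 0 := by
          rw [List.countP_append] at hcount
          omega
        simp [List.countP_append, hx', h0]
      · rintro l k ⟨a, b, hab, hk⟩ hkv hl
        have hab' : (sa ++ sb) ++ [x] = a ++ l :: b := by simpa using hab
        rcases b.eq_nil_or_concat with rfl | ⟨b', y, rfl⟩
        · obtain ⟨-, rfl⟩ := concat_inj' hab'
          simp
        · rw [List.concat_eq_append] at hab'
          have h3 : (sa ++ sb) ++ [x] = (a ++ l :: b') ++ [y] := by rw [hab']; simp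
          obtain ⟨h2, rfl⟩ := concat_inj' h3
          have hmem : l ∈ sb := by
            refine hocc l k ⟨a, b', h2, hk⟩ ?_ hl
            have hcnt : ((sa ++ sb) ++ [x]).countP isLetterL =
                (sa ++ sb).countP isLetterL := by simp [List.countP_append, hx']
            have hkv' : k = ((sa ++ sb) ++ [x]).countP isLetterL := hkv
            omega
          simp [hmem]

-- ### status machinery

theorem status_close_mono {A1 : VA Sig} {x : ℕ} (hseq1 : A1.Sequential)
    (hsfx : SemiFunctionalFor A1 x) {q : ℕ} {ls ls' : List (VLabel Sig)}
    (h1 : PrefixRun A1 ls q) (h2 : PrefixRun A1 ls' q)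
    (hc : (VLabel.closev x) ∈ ls) : (VLabel.closev x) ∈ ls' := by
  have hop' : (VLabel.openv x) ∈ ls' := by
    by_contra hno
    exact hsfx ⟨q, ls, ls', h1, h2, hc, hno⟩
  by_contra hnc
  obtain ⟨hp2, ct, qf, hct, hqf⟩ := h2
  obtain ⟨hp1, -⟩ := h1
  have hval2 := hseq1 _ ⟨qf, pathFrom_append hp2 hct, hqf⟩
  have hmem : (VLabel.closev x) ∈ ls' ++ ct := ((hval2 x).2.2.1).1 (by simp [hop'])
  have hcct : (VLabel.closev x) ∈ ct := by
    rcases List.mem_append.1 hmem with h | h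
    · exact absurd h hnc
    · exact h
  have hval1 := hseq1 _ ⟨qf, pathFrom_append hp1 hct, hqf⟩
  have hcount := (hval1 x).2.1
  rw [List.count_append] at hcount
  have h3 := count_pos_of_mem hc
  have h4 := count_pos_of_mem hcct
  omega

theorem status_open_mono {A1 : VA Sig} {x : ℕ} (hseq1 : A1.Sequential)
    (hsfx : SemiFunctionalFor A1 x) {q : ℕ} {ls ls' : List (VLabel Sig)}
    (h1 : PrefixRun A1 ls q) (h2 : PrefixRun A1 ls' q)
    (ho : (VLabel.openv x) ∈ ls) : (VLabel.openv x) ∈ ls' := by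
  by_cases hcl : (VLabel.closev x) ∈ ls
  · have hcl' := status_close_mono hseq1 hsfx h1 h2 hcl
    by_contra hno
    exact hsfx ⟨q, ls', ls', h2, h2, hcl', hno⟩
  · by_contra hno
    obtain ⟨hp1, ct, qf, hct, hqf⟩ := h1
    obtain ⟨hp2, -⟩ := h2
    have hval1 := hseq1 _ ⟨qf, pathFrom_append hp1 hct, hqf⟩
    have hciff : (VLabel.closev x) ∈ ls ++ ct := ((hval1 x).2.2.1).1 (by simp [ho])
    have hcct : (VLabel.closev x) ∈ ct := by
      rcases List.mem_append.1 hciff with h | h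
      · exact absurd h hcl
      · exact h
    have hcount := (hval1 x).1
    rw [List.count_append] at hcount
    have hoc := count_pos_of_mem ho
    have hno_ct : (VLabel.openv x) ∉ ct := by
      intro hm; have := count_pos_of_mem hm; omega
    have hval2 := hseq1 _ ⟨qf, pathFrom_append hp2 hct, hqf⟩
    have hmem : (VLabel.openv x) ∈ ls' ++ ct := ((hval2 x).2.2.1).2 (by simp [hcct])
    rcases List.mem_append.1 hmem with h | h
    · exact hno h
    · exact hno_ct h

theorem OpSt_iff {A1 : VA Sig} {x : ℕ} (hseq1 : A1.Sequential)
    (hsfx : SemiFunctionalFor A1 x) {q : ℕ} {ls : List (VLabel Sig)}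
    (h1 : PrefixRun A1 ls q) : OpSt A1 q x ↔ (VLabel.openv x) ∈ ls :=
  ⟨fun ⟨ls', h2, hm⟩ => status_open_mono hseq1 hsfx h2 h1 hm, fun hm => ⟨ls, h1, hm⟩⟩

theorem ClSt_iff {A1 : VA Sig} {x : ℕ} (hseq1 : A1.Sequential)
    (hsfx : SemiFunctionalFor A1 x) {q : ℕ} {ls : List (VLabel Sig)}
    (h1 : PrefixRun A1 ls q) : ClSt A1 q x ↔ (VLabel.closev x) ∈ ls :=
  ⟨fun ⟨ls', h2, hm⟩ => status_close_mono hseq1 hsfx h2 h1 hm, fun hm => ⟨ls, h1, hm⟩⟩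

theorem mem_Yset {A1 A2 : VA Sig} {x : ℕ} :
    x ∈ Yset A1 A2 ↔ x ∈ (varsOf A1 ∩ varsOf A2) ∧ UsedAll A2 x := Finset.mem_filter

/-- The bridge: the abstract event set of a group computes the actual `Y`-events
performed in the (letter-free) group segment. -/
theorem eventSet_bridge {A1 A2 : VA Sig} {d : List Sig} (hseq1 : A1.Sequential)
    (hsf : SemiFunctionalForSet A1 (varsOf A1 ∩ varsOf A2))
    {ubl utail : List (VLabel Sig)} {qs q : ℕ}
    (hubl : A1.PathFrom A1.q0 ubl qs) (hutail : A1.PathFrom qs utail q)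
    {ct : List (VLabel Sig)} {qf : ℕ} (hct : A1.PathFrom q ct qf) (hqf : qf ∈ A1.F)
    (hcnt : ∀ y : ℕ, (ubl ++ utail).count (VLabel.openv y) ≤ 1 ∧
      (ubl ++ utail).count (VLabel.closev y) ≤ 1) :
    ∀ l, l ∈ eventSet A1 A2 qs q ↔
      (l ∈ utail ∧ ∃ x ∈ Yset A1 A2, l = VLabel.openv x ∨ l = VLabel.closev x) := by
  have hpr1 : PrefixRun A1 ubl qs := ⟨hubl, utail ++ ct, qf, pathFrom_append hutail hct, hqf⟩
  have hpr2 : PrefixRun A1 (ubl ++ utail) q := ⟨pathFrom_append hubl hutail, ct, qf, hct, hqf⟩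
  intro l
  constructor
  · intro hl
    rcases Finset.mem_union.1 hl with h | h <;>
    · obtain ⟨x, hx, rfl⟩ := Finset.mem_image.1 h
      obtain ⟨hxY, hno, hyes⟩ := Finset.mem_filter.1 hx
      have hsfx := hsf x (mem_Yset.1 hxY).1
      first
      | (have hmm : (VLabel.openv x) ∈ ubl ++ utail := (OpSt_iff hseq1 hsfx hpr2).1 hyes
         have hnn : (VLabel.openv x) ∉ ubl := fun hm => hno ((OpSt_iff hseq1 hsfx hpr1).2 hm)
         exact ⟨by rcases List.mem_append.1 hmm with h' | h'; exact absurd h' hnn; exact h',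
           x, hxY, Or.inl rfl⟩)
      | (have hmm : (VLabel.closev x) ∈ ubl ++ utail := (ClSt_iff hseq1 hsfx hpr2).1 hyes
         have hnn : (VLabel.closev x) ∉ ubl := fun hm => hno ((ClSt_iff hseq1 hsfx hpr1).2 hm)
         exact ⟨by rcases List.mem_append.1 hmm with h' | h'; exact absurd h' hnn; exact h',
           x, hxY, Or.inr rfl⟩)
  · rintro ⟨hmem, x, hxY, rfl | rfl⟩
    · refine Finset.mem_union_left _ (Finset.mem_image.2 ⟨x, Finset.mem_filter.2 ⟨hxY, ?_, ?_⟩, rfl⟩)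
      · intro hOp
        have hsfx := hsf x (mem_Yset.1 hxY).1
        have h1 : (VLabel.openv x) ∈ ubl := (OpSt_iff hseq1 hsfx hpr1).1 hOp
        have := (hcnt x).1
        rw [List.count_append] at this
        have := count_pos_of_mem h1
        have := count_pos_of_mem hmem
        omega
      · exact ⟨ubl ++ utail, hpr2, by simp [hmem]⟩
    · refine Finset.mem_union_right _ (Finset.mem_image.2 ⟨x, Finset.mem_filter.2 ⟨hxY, ?_, ?_⟩, rfl⟩)
      · intro hCl
        have hsfx := hsf x (mem_Yset.1 hxY).1
        have h1 : (VLabel.closev x) ∈ ubl := (ClSt_iff hseq1 hsfx hpr1).1 hCl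
        have := (hcnt x).2
        rw [List.count_append] at this
        have := count_pos_of_mem h1
        have := count_pos_of_mem hmem
        omega
      · exact ⟨ubl ++ utail, hpr2, by simp [hmem]⟩

theorem utgt_spec {A2 : VA Sig} {l : VLabel Sig} (hU : UniqueTarget A2 l) {p q : ℕ}
    (h : (p, l, q) ∈ A2.δ) : q = utgt A2 l := by
  have hU' : ∃ qt : ℕ, ∀ p q : ℕ, (p, l, q) ∈ A2.δ → q = qt := hU
  unfold utgt
  rw [dif_pos hU']
  exact hU'.choose_spec p q h

theorem eventSet_unique_target {A1 A2 : VA Sig}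
    (hsync : ∀ x ∈ varsOf A1 ∩ varsOf A2, SyncForVA A2 x) {qs q : ℕ} {l : VLabel Sig}
    (hl : l ∈ eventSet A1 A2 qs q) : UniqueTarget A2 l := by
  rcases Finset.mem_union.1 hl with h | h <;>
  · obtain ⟨x, hx, rfl⟩ := Finset.mem_image.1 h
    obtain ⟨hxY, -⟩ := Finset.mem_filter.1 hx
    have hs := hsync x (mem_Yset.1 hxY).1
    first
    | exact hs.1
    | exact hs.2.1

theorem path_split_utgt {A2 : VA Sig} {p q : ℕ} {ls : List (VLabel Sig)}
    (h : A2.PathFrom p ls q) {l : VLabel Sig} (hl : l ∈ ls) (hU : UniqueTarget A2 l) :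
    ∃ u v pm, ls = u ++ l :: v ∧ A2.PathFrom p u pm ∧ (pm, l, utgt A2 l) ∈ A2.δ ∧
      A2.PathFrom (utgt A2 l) v q := by
  induction h with
  | nil => simp at hl
  | @cons p' q' r' l' ls' ht htail ih =>
    by_cases hll : l' = l
    · subst hll
      have := utgt_spec hU ht
      subst this
      exact ⟨[], ls', p', rfl, .nil _, ht, htail⟩
    · have hl' : l ∈ ls' := by
        rcases List.mem_cons.1 hl with h | h
        · exact absurd h.symm hll
        · exact h
      obtain ⟨u, v, pm, rfl, h1, h2, h3⟩ := ih hl'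
      exact ⟨l' :: u, v, pm, rfl, .cons ht h1, h2, h3⟩

/-- Two feasible, co-reachable exits of a group must coincide (otherwise we could pump a
cycle and obtain an accepting invalid run of the sequential `A2`). -/
theorem exit_unique {A2 : VA Sig} {d : List Sig} (hseq2 : A2.Sequential)
    {w : ℕ × ℕ} {E : Finset (VLabel Sig)} {c : ℕ} {e1 e2 : VLabel Sig}
    (hU1 : UniqueTarget A2 e1) (hU2 : UniqueTarget A2 e2)
    (hx1 : ∃ x : ℕ, e1 = VLabel.openv x ∨ e1 = VLabel.closev x)
    (hreach : ∃ pls, A2.PathFrom A2.q0 pls w.1)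
    (hGE1 : GE A2 d w E c e1) (hGE2 : GE A2 d w E c e2)
    (he1E : e1 ∈ E) (he2E : e2 ∈ E)
    (hco : COany A2 (utgt A2 e1)) : e1 = e2 := by
  by_contra hne
  obtain ⟨pls, hpls⟩ := hreach
  obtain ⟨sa1, sb1, hπ1, -, -, hE1⟩ := hGE1
  obtain ⟨sa2, sb2, hπ2, -, -, hE2⟩ := hGE2
  have he2sb1 : e2 ∈ sb1 := by
    rcases hE1 e2 he2E with h | h
    · exact absurd h.symm hne
    · exact h
  have he2π1 : e2 ∈ sa1 ++ sb1 ++ [e1] := by simp [he2sb1]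
  obtain ⟨u1, v1, pm1, hsplit1, hp1, ht1, hrest1⟩ := path_split_utgt hπ1 he2π1 hU2
  have he1v1 : e1 ∈ v1 := by
    rcases v1.eq_nil_or_concat with rfl | ⟨v1', y, rfl⟩
    · exfalso
      have h3 : (sa1 ++ sb1) ++ [e1] = u1 ++ [e2] := by simpa using hsplit1
      exact hne (concat_inj' h3).2
    · rw [List.concat_eq_append] at hsplit1
      have h3 : (sa1 ++ sb1) ++ [e1] = (u1 ++ e2 :: v1') ++ [y] := by
        rw [show sa1 ++ sb1 ++ [e1] = (sa1 ++ sb1) ++ [e1] from by simp] at hsplit1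
        rw [hsplit1]; simp
      obtain ⟨-, rfl⟩ := concat_inj' h3
      simp
  have he1sb2 : e1 ∈ sb2 := by
    rcases hE2 e1 he1E with h | h
    · exact absurd h hne
    · exact h
  have he1π2 : e1 ∈ sa2 ++ sb2 ++ [e2] := by simp [he1sb2]
  obtain ⟨u2, v2, pm2, hsplit2, hp2, ht2, hrest2⟩ := path_split_utgt hπ2 he1π2 hU1
  obtain ⟨ct, qf, hct, hqf⟩ := hco
  have hbig : A2.PathFrom A2.q0
      (pls ++ ((sa1 ++ sb1 ++ [e1]) ++ (v2 ++ (v1 ++ ct)))) qf :=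
    pathFrom_append hpls (pathFrom_append hπ1
      (pathFrom_append hrest2 (pathFrom_append hrest1 hct)))
  have hval := hseq2 _ ⟨qf, hbig, hqf⟩
  have hc1 : 1 ≤ ([e1] : List (VLabel Sig)).count e1 := by simp
  have hc2 := count_pos_of_mem he1v1
  obtain ⟨x, rfl | rfl⟩ := hx1
  · have hcount := (hval x).1
    simp only [List.count_append] at hcount
    omega
  · have hcount := (hval x).2.1
    simp only [List.count_append] at hcount
    omega

theorem occ_cases {X Z : List (VLabel Sig)} {l : VLabel Sig} {k : ℕ}
    (h : Occ (X ++ Z) l k) :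
    Occ X l k ∨ ∃ k', Occ Z l k' ∧ k = X.countP isLetterL + k' := by
  obtain ⟨a, b, hab, hk⟩ := h
  rcases List.append_eq_append_iff.1 hab.symm with ⟨a', hX, hZ⟩ | ⟨c', ha, hZ⟩
  · rcases a' with - | ⟨y, w''⟩
    · right
      refine ⟨0, ⟨[], b, by simpa using hZ.symm, rfl⟩, ?_⟩
      have hXa : X = a := by simpa using hX
      subst hXa
      omega
    · left
      rw [List.cons_append] at hZ
      obtain ⟨rfl, rfl⟩ := List.cons_eq_cons.1 hZ
      exact ⟨a, w'', hX, hk⟩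
  · right
    refine ⟨c'.countP isLetterL, ⟨c', b, hZ, rfl⟩, ?_⟩
    subst ha
    simp only [List.countP_append] at hk
    omega

theorem occ_prefix {X Z : List (VLabel Sig)} {l : VLabel Sig} {k : ℕ}
    (h : Occ (X ++ Z) l k) (hnz : l ∉ Z) : Occ X l k := by
  rcases occ_cases h with h | ⟨k', h', -⟩
  · exact h
  · exact absurd h'.mem hnz

theorem eventSet_form {A1 A2 : VA Sig} {qs q : ℕ} {l : VLabel Sig}
    (h : l ∈ eventSet A1 A2 qs q) :
    ∃ x ∈ Yset A1 A2, l = VLabel.openv x ∨ l = VLabel.closev x := by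
  rcases Finset.mem_union.1 h with h' | h' <;>
  · obtain ⟨x, hx, rfl⟩ := Finset.mem_image.1 h'
    obtain ⟨hxY, -⟩ := Finset.mem_filter.1 hx
    first
    | exact ⟨x, hxY, Or.inl rfl⟩
    | exact ⟨x, hxY, Or.inr rfl⟩

theorem sound_aux {A1 A2 : VA Sig} {d : List Sig}
    (hseq1 : A1.Sequential) (hseq2 : A2.Sequential)
    (hsf : SemiFunctionalForSet A1 (varsOf A1 ∩ varsOf A2))
    (hsync : ∀ x ∈ varsOf A1 ∩ varsOf A2, SyncForVA A2 x) :
    ∀ {q s r s' : ℕ} {rest : List (VLabel Sig)}, Trace A1 (chk A1 A2 d) q s rest r s' →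
    ∀ u ubl utail c qs w,
      s = Nat.pair c (Nat.pair qs w) →
      u = ubl ++ utail →
      A1.PathFrom A1.q0 ubl qs →
      A1.PathFrom qs utail q →
      (∀ l ∈ utail, isLetterL l = false) →
      ubl.countP isLetterL = c →
      readWord (u ++ rest) = d →
      (w ≠ 0 → ∃ pls, A2.PathFrom A2.q0 pls (Nat.unpair (w - 1)).1 ∧
         readWord pls = d.take (Nat.unpair (w - 1)).2 ∧ (Nat.unpair (w - 1)).2 ≤ c ∧
         (∀ l k, (∃ x ∈ Yset A1 A2, l = VLabel.openv x ∨ l = VLabel.closev x) →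
            Occ ubl l k → Occ pls l k)) →
      r ∈ A1.F → AccBad A1 A2 d r s' →
      ∃ μ2 ∈ vaSem A2 d, Compatible (runMapping (u ++ rest)) μ2 := by
  intro q s r s' rest hTr
  induction hTr with
  | nil q s =>
    intro u ubl utail c qs w hs hu hubl hutail hlf hc hread hW hrF hbad
    subst hs hu
    simp only [List.append_nil] at hread ⊢
    simp only [AccBad, Nat.unpair_pair] at hbad
    obtain ⟨hw0, hFINA⟩ := hbad
    obtain ⟨pls, hpls, hplsrw, hwle, hcov⟩ := hW hw0
    obtain ⟨sa, sb, qf, hpath, hqf, hsarw, hsblf, hEmem⟩ := hFINA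
    set w2 := (Nat.unpair (w - 1)).2 with hw2def
    have hcomp : A2.PathFrom A2.q0 (pls ++ (sa ++ sb)) qf := pathFrom_append hpls hpath
    have hacc2 : AcceptsWith A2 (pls ++ (sa ++ sb)) := ⟨qf, hcomp, hqf⟩
    have hcomprw : readWord (pls ++ (sa ++ sb)) = d := by
      rw [readWord_append, readWord_append, hplsrw, hsarw,
        readWord_eq_nil_of_letterfree hsblf]
      simp [List.take_append_drop]
    have hval2 := hseq2 _ hacc2
    refine ⟨runMapping (pls ++ (sa ++ sb)), ⟨_, hacc2, hcomprw, hval2, rfl⟩, ?_⟩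
    have hpath1 : A1.PathFrom A1.q0 (ubl ++ utail) q := pathFrom_append hubl hutail
    have hval1 := hseq1 _ ⟨q, hpath1, hrF⟩
    have hlen : (ubl ++ utail).countP isLetterL = d.length := by
      rw [← readWord_countP, hread]
    have hlen2 : utail.countP isLetterL = 0 := countP_eq_zero_of_all hlf
    have hcn : c = d.length := by
      rw [List.countP_append] at hlen
      omega
    have hplscp : pls.countP isLetterL = w2 := by
      have hh := congrArg List.length hplsrw
      rw [readWord_countP, List.length_take] at hh
      omega
    have hsacp : sa.countP isLetterL = d.length - w2 := by
      have hh := congrArg List.length hsarw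
      rw [readWord_countP, List.length_drop] at hh
      omega
    have key : ∀ l0, (∃ x' ∈ Yset A1 A2, l0 = VLabel.openv x' ∨ l0 = VLabel.closev x') →
        l0 ∈ ubl ++ utail → l0 ∈ pls ++ (sa ++ sb) →
        (ubl ++ utail).count l0 ≤ 1 → (pls ++ (sa ++ sb)).count l0 ≤ 1 →
        evpos (ubl ++ utail) l0 = evpos (pls ++ (sa ++ sb)) l0 := by
      intro l0 hY0 hm1 hm2 hcnt1 hcnt2
      rcases List.mem_append.1 hm1 with hin | hin
      · obtain ⟨hocc, -⟩ := mem_occ hin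
        have hocc1 : Occ (ubl ++ utail) l0 (evpos ubl l0 - 1) := hocc.append_right utail
        have hocc2 : Occ (pls ++ (sa ++ sb)) l0 (evpos ubl l0 - 1) :=
          (hcov l0 _ hY0 hocc).append_right (sa ++ sb)
        rw [occ_evpos hocc1 hcnt1, occ_evpos hocc2 hcnt2]
      · have hbridge := eventSet_bridge (d := d) hseq1 hsf hubl hutail
          (VA.PathFrom.nil q) hrF (fun y => ⟨(hval1 y).1, (hval1 y).2.1⟩)
        have hE : l0 ∈ eventSet A1 A2 qs q := (hbridge l0).2 ⟨hin, hY0⟩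
        have hsbm : l0 ∈ sb := hEmem l0 hE
        obtain ⟨sb1, sb2, hsb⟩ := List.append_of_mem hsbm
        obtain ⟨a0, b0, hut⟩ := List.append_of_mem hin
        have ha0 : a0.countP isLetterL = 0 :=
          countP_eq_zero_of_all (fun l hl => hlf l (by rw [hut]; simp [hl]))
        have hocc1 : Occ (ubl ++ utail) l0 c :=
          ⟨ubl ++ a0, b0, by rw [hut]; simp, by simp [List.countP_append, hc, ha0]⟩
        have hsb1 : sb1.countP isLetterL = 0 :=
          countP_eq_zero_of_all (fun l hl => hsblf l (by rw [hsb]; simp [hl]))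
        have hocc2 : Occ (pls ++ (sa ++ sb)) l0
            (pls.countP isLetterL + (sa.countP isLetterL + sb1.countP isLetterL)) :=
          ⟨pls ++ (sa ++ sb1), sb2, by rw [hsb]; simp, by simp [List.countP_append]⟩
        rw [occ_evpos hocc1 hcnt1, occ_evpos hocc2 hcnt2, hplscp, hsacp, hsb1, hcn]
        omega
    intro x s1 s2 h1 h2
    simp only [runMapping] at h1 h2
    by_cases hmem1 : (VLabel.openv x) ∈ ubl ++ utail
    swap
    · rw [if_neg hmem1] at h1; simp at h1
    by_cases hmem2 : (VLabel.openv x) ∈ pls ++ (sa ++ sb)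
    swap
    · rw [if_neg hmem2] at h2; simp at h2
    rw [if_pos hmem1] at h1
    rw [if_pos hmem2] at h2
    have hx1 : x ∈ varsOf A1 :=
      mem_varsOf_of_mem_path hpath1 hmem1 (by simp [labelVars])
    have hx2 : x ∈ varsOf A2 :=
      mem_varsOf_of_mem_path hcomp hmem2 (by simp [labelVars])
    have hxX : x ∈ varsOf A1 ∩ varsOf A2 := Finset.mem_inter.2 ⟨hx1, hx2⟩
    by_cases hxY : x ∈ Yset A1 A2
    swap
    · rcases (hsync x hxX).2.2 with hall | hnone
      · exact absurd (mem_Yset.2 ⟨hxX, fun ls hls => (hall ls hls).1⟩) hxY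
      · exact absurd hmem2 (hnone _ hacc2).1
    · have hcl1 : (VLabel.closev x) ∈ ubl ++ utail := ((hval1 x).2.2.1).1 hmem1
      have hcl2 : (VLabel.closev x) ∈ pls ++ (sa ++ sb) := ((hval2 x).2.2.1).1 hmem2
      have keyo := key (VLabel.openv x) ⟨x, hxY, Or.inl rfl⟩ hmem1 hmem2
        (hval1 x).1 (hval2 x).1
      have keyc := key (VLabel.closev x) ⟨x, hxY, Or.inr rfl⟩ hcl1 hcl2
        (hval1 x).2.1 (hval2 x).2.1
      rw [← Option.some.inj h1, ← Option.some.inj h2]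
      show (evpos (ubl ++ utail) (VLabel.openv x), evpos (ubl ++ utail) (VLabel.closev x)) =
        (evpos (pls ++ (sa ++ sb)) (VLabel.openv x),
          evpos (pls ++ (sa ++ sb)) (VLabel.closev x))
      rw [keyo, keyc]
  | @cons q s q' r' s'' l rest h ht ih =>
    intro u ubl utail c qs w hs hu hubl hutail hlf hc hread hW hrF hbad
    subst hs hu
    have hfullpath : A1.PathFrom A1.q0 ((ubl ++ utail) ++ (l :: rest)) r' :=
      pathFrom_append (pathFrom_append hubl hutail) (.cons h ht.path)
    have hvalfull := hseq1 _ ⟨r', hfullpath, hrF⟩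
    have hlen2 : utail.countP isLetterL = 0 := countP_eq_zero_of_all hlf
    have goalrw : (∃ μ2 ∈ vaSem A2 d,
          Compatible (runMapping (((ubl ++ utail) ++ [l]) ++ rest)) μ2) →
        ∃ μ2 ∈ vaSem A2 d, Compatible (runMapping ((ubl ++ utail) ++ l :: rest)) μ2 := by
      intro hP
      rwa [List.append_assoc, List.singleton_append] at hP
    have nonletter : ∀ (hnl : isLetterL l = false)
        (hchk : chk A1 A2 d (Nat.pair c (Nat.pair qs w)) (q, l, q') =
          Nat.pair c (Nat.pair qs w)),
        ∃ μ2 ∈ vaSem A2 d, Compatible (runMapping ((ubl ++ utail) ++ l :: rest)) μ2 := by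
      intro hnl hchk
      rw [hchk] at ht
      refine goalrw (ih _ ubl (utail ++ [l]) c qs w hchk (by simp) hubl
        (pathFrom_append hutail (pathFrom_single h)) ?_ hc ?_ hW hrF hbad)
      · intro l' hl'
        rcases List.mem_append.1 hl' with h' | h'
        · exact hlf l' h'
        · simp at h'; subst h'; exact hnl
      · rw [List.append_assoc, List.singleton_append]
        exact hread
    rcases l with - | σ | x | x
    case eps => exact nonletter rfl rfl
    case openv => exact nonletter rfl rfl
    case closev => exact nonletter rfl rfl
    case letter =>
      have hlen : ((ubl ++ utail) ++ (VLabel.letter σ :: rest)).countP isLetterL =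
          d.length := by rw [← readWord_countP, hread]
      have hc1n : c + 1 ≤ d.length := by
        simp [List.countP_append, List.countP_cons, isLetterL] at hlen
        omega
      have hchk : chk A1 A2 d (Nat.pair c (Nat.pair qs w)) (q, VLabel.letter σ, q') =
          Nat.pair (c + 1) (Nat.pair q' (gstep A1 A2 d c qs q w)) := by
        simp only [chk, Nat.unpair_pair]
        congr 1
        omega
      rw [hchk] at ht
      have hcnts : ∀ y : ℕ, (ubl ++ utail).count (VLabel.openv y) ≤ 1 ∧
          (ubl ++ utail).count (VLabel.closev y) ≤ 1 := by
        intro y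
        have o := (hvalfull y).1
        have cl := (hvalfull y).2.1
        rw [List.count_append] at o cl
        exact ⟨by omega, by omega⟩
      have hbridge := eventSet_bridge (d := d) hseq1 hsf hubl hutail
        (VA.PathFrom.cons h ht.path) hrF hcnts
      have hWnew : gstep A1 A2 d c qs q w ≠ 0 →
          ∃ pls, A2.PathFrom A2.q0 pls
            (Nat.unpair (gstep A1 A2 d c qs q w - 1)).1 ∧
          readWord pls = d.take (Nat.unpair (gstep A1 A2 d c qs q w - 1)).2 ∧
          (Nat.unpair (gstep A1 A2 d c qs q w - 1)).2 ≤ c + 1 ∧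
          (∀ l0 k, (∃ x ∈ Yset A1 A2, l0 = VLabel.openv x ∨ l0 = VLabel.closev x) →
            Occ ((ubl ++ utail) ++ [VLabel.letter σ]) l0 k →
            Occ pls l0 k) := by
        intro hw0'
        by_cases hwz : w = 0
        · rw [gstep, if_pos hwz] at hw0'
          exact absurd rfl hw0'
        obtain ⟨pls, hpls, hplsrw, hwle, hcov⟩ := hW hwz
        set w2 := (Nat.unpair (w - 1)).2 with hw2def
        by_cases hE0 : eventSet A1 A2 qs q = ∅
        · have hgw : gstep A1 A2 d c qs q w = w := by rw [gstep, if_neg hwz, if_pos hE0]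
          rw [hgw]
          refine ⟨pls, hpls, hplsrw, by omega, ?_⟩
          intro l0 k hY0 hocc
          have h1 : l0 ∉ [VLabel.letter σ] := by
            rcases hY0 with ⟨x', -, rfl | rfl⟩ <;> simp
          have hocc2 := occ_prefix hocc h1
          have h2 : l0 ∉ utail := by
            intro hmem
            have := (hbridge l0).2 ⟨hmem, hY0⟩
            rw [hE0] at this
            simp at this
          exact hcov l0 k hY0 (occ_prefix hocc2 h2)
        · by_cases hfe : ∃ e ∈ eventSet A1 A2 qs q,
              GE A2 d (Nat.unpair (w - 1)) (eventSet A1 A2 qs q) c e ∧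
                COany A2 (utgt A2 e)
          swap
          · have hgw : gstep A1 A2 d c qs q w = 0 := by
              rw [gstep, if_neg hwz, if_neg hE0, dif_neg hfe]
            rw [hgw] at hw0'
            exact absurd rfl hw0'
          obtain ⟨heE, hGEe, hCOe⟩ := hfe.choose_spec
          obtain ⟨sa, sb, hπ, hsarw, hsblf, hEor⟩ := hGEe
          have hgw : gstep A1 A2 d c qs q w =
              1 + Nat.pair (utgt A2 hfe.choose) c := by
            rw [gstep, if_neg hwz, if_neg hE0, dif_pos hfe]
          rw [hgw]
          have hwm1 : 1 + Nat.pair (utgt A2 hfe.choose) c - 1 =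
              Nat.pair (utgt A2 hfe.choose) c := by omega
          rw [hwm1, Nat.unpair_pair]
          have hplscp : pls.countP isLetterL = w2 := by
            have hh := congrArg List.length hplsrw
            rw [readWord_countP, List.length_take] at hh
            omega
          have hsacp : sa.countP isLetterL = c - w2 := by
            have hh := congrArg List.length hsarw
            rw [readWord_countP, List.length_take, List.length_drop] at hh
            omega
          refine ⟨pls ++ (sa ++ sb ++ [hfe.choose]), pathFrom_append hpls hπ, ?_,
            by omega, ?_⟩
          · have hYe := eventSet_form heE
            have hre : readWord [hfe.choose] = ([] : List Sig) := by
              rcases hYe with ⟨x', -, hfx⟩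
              rcases hfx with hfx | hfx <;> rw [hfx] <;> rfl
            rw [readWord_append, readWord_append, readWord_append, hplsrw, hsarw,
              readWord_eq_nil_of_letterfree hsblf, hre]
            have h2 : w2 + (c - w2) = c := by omega
            have htake : d.take w2 ++ (d.drop w2).take (c - w2) = d.take c := by
              rw [← h2, List.take_add]
              have h3 : w2 + (c - w2) - w2 = c - w2 := by omega
              rw [h3]
            simp only [List.append_nil]
            exact htake
          · intro l0 k hY0 hocc
            have h1 : l0 ∉ [VLabel.letter σ] := by
              rcases hY0 with ⟨x', -, rfl | rfl⟩ <;> simp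
            have hocc2 := occ_prefix hocc h1
            rcases occ_cases hocc2 with hX | ⟨k', hZ, hkk⟩
            · exact (hcov l0 k hY0 hX).append_right _
            · obtain ⟨a0, b0, hut, hk0⟩ := hZ
              have ha0 : a0.countP isLetterL = 0 :=
                countP_eq_zero_of_all (fun l' hl' => hlf l' (by rw [hut]; simp [hl']))
              have hkc : k = c := by omega
              have hlmem : l0 ∈ utail := by rw [hut]; simp
              have hE : l0 ∈ eventSet A1 A2 qs q := (hbridge l0).2 ⟨hlmem, hY0⟩
              have hsbcp : sb.countP isLetterL = 0 := countP_eq_zero_of_all hsblf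
              rcases hEor l0 hE with rfl | hsbm
              · refine ⟨pls ++ (sa ++ sb), [], by simp, ?_⟩
                simp only [List.countP_append]
                omega
              · obtain ⟨sb1, sb2, hsbeq⟩ := List.append_of_mem hsbm
                have hsb1 : sb1.countP isLetterL = 0 :=
                  countP_eq_zero_of_all
                    (fun l' hl' => hsblf l' (by rw [hsbeq]; simp [hl']))
                refine ⟨pls ++ (sa ++ sb1), sb2 ++ [hfe.choose], by rw [hsbeq]; simp, ?_⟩
                simp only [List.countP_append]
                omega
      refine goalrw (ih _ ((ubl ++ utail) ++ [VLabel.letter σ]) [] (c + 1) q'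
        (gstep A1 A2 d c qs q w) hchk (by simp)
        (pathFrom_append (pathFrom_append hubl hutail) (pathFrom_single h))
        (.nil q') (by simp) ?_ ?_ hWnew hrF hbad)
      · simp [List.countP_append, List.countP_cons, hc, hlen2, isLetterL]
      · rw [List.append_assoc, List.singleton_append]
        exact hread

theorem complete_aux {A1 A2 : VA Sig} {d : List Sig}
    (hseq1 : A1.Sequential) (hseq2 : A2.Sequential)
    (hsf : SemiFunctionalForSet A1 (varsOf A1 ∩ varsOf A2))
    (hsync : ∀ x ∈ varsOf A1 ∩ varsOf A2, SyncForVA A2 x)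
    (ls1 : List (VLabel Sig)) (hval1 : ValidLabels ls1) (hread1 : readWord ls1 = d)
    {ls2 : List (VLabel Sig)} {qf2 : ℕ}
    (hqf2 : qf2 ∈ A2.F) (hread2 : readWord ls2 = d) (hval2 : ValidLabels ls2)
    (hev : ∀ x ∈ Yset A1 A2, (VLabel.openv x) ∈ ls1 →
       evpos ls2 (VLabel.openv x) = evpos ls1 (VLabel.openv x) ∧
       evpos ls2 (VLabel.closev x) = evpos ls1 (VLabel.closev x))
    (husedall : ∀ x ∈ Yset A1 A2, (VLabel.openv x) ∈ ls2 ∧ (VLabel.closev x) ∈ ls2) :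
    ∀ {q s r s' : ℕ} {rest : List (VLabel Sig)}, Trace A1 (chk A1 A2 d) q s rest r s' →
    ∀ u ubl utail c qs w,
      s = Nat.pair c (Nat.pair qs w) →
      u = ubl ++ utail →
      u ++ rest = ls1 →
      A1.PathFrom A1.q0 ubl qs →
      A1.PathFrom qs utail q →
      (∀ l ∈ utail, isLetterL l = false) →
      ubl.countP isLetterL = c →
      w ≠ 0 →
      (∃ pf sf, ls2 = pf ++ sf ∧
        A2.PathFrom A2.q0 pf (Nat.unpair (w - 1)).1 ∧
        A2.PathFrom (Nat.unpair (w - 1)).1 sf qf2 ∧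
        readWord pf = d.take (Nat.unpair (w - 1)).2 ∧
        (Nat.unpair (w - 1)).2 ≤ c ∧
        (∀ x ∈ Yset A1 A2, ∀ l : VLabel Sig,
          (l = VLabel.openv x ∨ l = VLabel.closev x) → l ∈ ls1 →
          (l ∈ pf ↔ l ∈ ubl))) →
      r ∈ A1.F → AccBad A1 A2 d r s' := by
  intro q s r s' rest hTr
  induction hTr with
  | nil q s =>
    intro u ubl utail c qs w hs hu hfull hubl hutail hlf hc hw0 hWT hrF
    subst hs hu
    simp only [List.append_nil] at hfull
    subst hfull
    obtain ⟨pf, sf, hls2, hpf, hsfp, hpfrw, hwle, hiff⟩ := hWT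
    simp only [AccBad, Nat.unpair_pair]
    refine ⟨hw0, ?_⟩
    set w2 := (Nat.unpair (w - 1)).2 with hw2def
    -- letter counts
    have hlen1 : (ubl ++ utail).countP isLetterL = d.length := by
      rw [← readWord_countP, hread1]
    have hlent : utail.countP isLetterL = 0 := countP_eq_zero_of_all hlf
    have hcn : c = d.length := by rw [List.countP_append] at hlen1; omega
    have hpfcp : pf.countP isLetterL = w2 := by
      have hh := congrArg List.length hpfrw
      rw [readWord_countP, List.length_take] at hh
      omega
    have hsfrw : readWord sf = d.drop w2 := by
      have h1 : readWord pf ++ readWord sf = d.take w2 ++ d.drop w2 := by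
        rw [← readWord_append, ← hls2, hread2, List.take_append_drop]
      rw [hpfrw] at h1
      exact List.append_cancel_left h1
    have hsfcp : sf.countP isLetterL = d.length - w2 := by
      have hh := congrArg List.length hsfrw
      rw [readWord_countP, List.length_drop] at hh
      omega
    obtain ⟨sa, sb, hsfeq, hsblf, hsacp, hcrit⟩ := split_letters sf
    have hsarw : readWord sa = d.drop w2 := by
      have h1 : readWord sf = readWord sa ++ readWord sb := by rw [hsfeq, readWord_append]
      rw [readWord_eq_nil_of_letterfree hsblf, List.append_nil] at h1
      rw [← h1, hsfrw]
    refine ⟨sa, sb, qf2, by rw [← hsfeq]; exact hsfp, hqf2, hsarw, hsblf, ?_⟩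
    -- final group events are in sb
    intro l0 hE
    have hbridge := eventSet_bridge (d := d) hseq1 hsf hubl hutail
      (VA.PathFrom.nil q) hrF (fun y => ⟨(hval1 y).1, (hval1 y).2.1⟩)
    obtain ⟨hl0ut, hY0⟩ := (hbridge l0).1 hE
    obtain ⟨x, hxY, hform⟩ := hY0
    have hl0ls1 : l0 ∈ ubl ++ utail := by simp [hl0ut]
    have hopls1 : (VLabel.openv x) ∈ ubl ++ utail := by
      rcases hform with rfl | rfl
      · exact hl0ls1
      · exact ((hval1 x).2.2.1).2 hl0ls1
    have hevx := hev x hxY hopls1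
    have hl0ls2 : l0 ∈ ls2 := by
      rcases hform with rfl | rfl
      · exact (husedall x hxY).1
      · exact (husedall x hxY).2
    have hcnt1 : (ubl ++ utail).count l0 ≤ 1 := by
      rcases hform with rfl | rfl
      · exact (hval1 x).1
      · exact (hval1 x).2.1
    have hcnt2 : ls2.count l0 ≤ 1 := by
      rcases hform with rfl | rfl
      · exact (hval2 x).1
      · exact (hval2 x).2.1
    -- position of l0 in ls1 is 1 + c
    obtain ⟨a0, b0, hut⟩ := List.append_of_mem hl0ut
    have ha0 : a0.countP isLetterL = 0 :=
      countP_eq_zero_of_all (fun l' hl' => hlf l' (by rw [hut]; simp [hl']))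
    have hocc1 : Occ (ubl ++ utail) l0 c :=
      ⟨ubl ++ a0, b0, by rw [hut]; simp, by simp [List.countP_append, hc, ha0]⟩
    have hev1 : evpos (ubl ++ utail) l0 = 1 + c := occ_evpos hocc1 hcnt1
    have hev2 : evpos ls2 l0 = 1 + c := by
      rcases hform with rfl | rfl
      · rw [hevx.1, hev1]
      · rw [hevx.2, hev1]
    -- l0 is not in pf
    have hl0nubl : l0 ∉ ubl := by
      intro hm
      have := count_pos_of_mem hm
      have := count_pos_of_mem hl0ut
      rw [List.count_append] at hcnt1
      omega
    have hl0npf : l0 ∉ pf := fun hm =>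
      hl0nubl ((hiff x hxY l0 hform hl0ls1).1 hm)
    have hl0sf : l0 ∈ sf := by
      rw [hls2] at hl0ls2
      rcases List.mem_append.1 hl0ls2 with hm | hm
      · exact absurd hm hl0npf
      · exact hm
    -- occurrence of l0 in sf has all of sf's letters before it
    obtain ⟨hoccsf, -⟩ := mem_occ hl0sf
    have hevsf : evpos ls2 l0 = pf.countP isLetterL + evpos sf l0 := by
      rw [hls2, evpos_append_right _ hl0npf]
    have hevsfv : evpos sf l0 = 1 + (d.length - w2) := by
      rw [hevsf, hpfcp] at hev2
      omega
    refine hcrit l0 (evpos sf l0 - 1) hoccsf (by rw [hevsfv, hsfcp]; omega) ?_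
    rcases hform with rfl | rfl <;> rfl
  | @cons q s q' r' s'' l rest h ht ih =>
    intro u ubl utail c qs w hs hu hfull hubl hutail hlf hc hw0 hWT hrF
    subst hs hu
    have hlent : utail.countP isLetterL = 0 := countP_eq_zero_of_all hlf
    have nonletter : ∀ (hnl : isLetterL l = false)
        (hchk : chk A1 A2 d (Nat.pair c (Nat.pair qs w)) (q, l, q') =
          Nat.pair c (Nat.pair qs w)), AccBad A1 A2 d r' s'' := by
      intro hnl hchk
      refine ih ((ubl ++ utail) ++ [l]) ubl (utail ++ [l]) c qs w hchk (by simp) ?_ hubl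
        (pathFrom_append hutail (pathFrom_single h)) ?_ hc hw0 ?_ hrF
      · rw [List.append_assoc, List.singleton_append]
        exact hfull
      · intro l' hl'
        rcases List.mem_append.1 hl' with h' | h'
        · exact hlf l' h'
        · simp at h'; subst h'; exact hnl
      · obtain ⟨pf, sf, h1, h2, h3, h4, h5, h6⟩ := hWT
        exact ⟨pf, sf, h1, h2, h3, h4, h5, h6⟩
    rcases l with - | σ | x | x
    case eps => exact nonletter rfl rfl
    case openv => exact nonletter rfl rfl
    case closev => exact nonletter rfl rfl
    case letter =>
      obtain ⟨pf, sf, hls2, hpf, hsfp, hpfrw, hwle, hiff⟩ := hWT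
      set w2 := (Nat.unpair (w - 1)).2 with hw2def
      have hfullpath : A1.PathFrom A1.q0 ((ubl ++ utail) ++ (VLabel.letter σ :: rest)) r' :=
        pathFrom_append (pathFrom_append hubl hutail) (.cons h ht.path)
      have hlen1 : ((ubl ++ utail) ++ (VLabel.letter σ :: rest)).countP isLetterL =
          d.length := by rw [← readWord_countP, hfull, hread1]
      have hc1n : c + 1 ≤ d.length := by
        simp [List.countP_append, List.countP_cons, isLetterL] at hlen1
        omega
      have hchk : chk A1 A2 d (Nat.pair c (Nat.pair qs w)) (q, VLabel.letter σ, q') =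
          Nat.pair (c + 1) (Nat.pair q' (gstep A1 A2 d c qs q w)) := by
        simp only [chk, Nat.unpair_pair]
        congr 1
        omega
      have hcnts : ∀ y : ℕ, (ubl ++ utail).count (VLabel.openv y) ≤ 1 ∧
          (ubl ++ utail).count (VLabel.closev y) ≤ 1 := by
        intro y
        have o := (hval1 y).1
        have cl := (hval1 y).2.1
        rw [← hfull, List.count_append] at o cl
        exact ⟨by omega, by omega⟩
      have hbridge := eventSet_bridge (d := d) hseq1 hsf hubl hutail
        (VA.PathFrom.cons h ht.path) hrF hcnts
      have hpfcp : pf.countP isLetterL = w2 := by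
        have hh := congrArg List.length hpfrw
        rw [readWord_countP, List.length_take] at hh
        omega
      have hsfrw : readWord sf = d.drop w2 := by
        have h1 : readWord pf ++ readWord sf = d.take w2 ++ d.drop w2 := by
          rw [← readWord_append, ← hls2, hread2, List.take_append_drop]
        rw [hpfrw] at h1
        exact List.append_cancel_left h1
      by_cases hE0 : eventSet A1 A2 qs q = ∅
      · have hgw : gstep A1 A2 d c qs q w = w := by rw [gstep, if_neg hw0, if_pos hE0]
        rw [hgw] at hchk
        refine ih ((ubl ++ utail) ++ [VLabel.letter σ]) ((ubl ++ utail) ++ [VLabel.letter σ])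
          [] (c + 1) q' w hchk (by simp)
          ?_ (pathFrom_append (pathFrom_append hubl hutail) (pathFrom_single h))
          (.nil q') (by simp) ?_ hw0 ?_ hrF
        · rw [List.append_assoc, List.singleton_append]
          exact hfull
        · simp [List.countP_append, List.countP_cons, hc, hlent, isLetterL]
        · refine ⟨pf, sf, hls2, hpf, hsfp, hpfrw, by omega, ?_⟩
          intro x hxY l0 hform hl0ls1
          rw [hiff x hxY l0 hform hl0ls1]
          constructor
          · intro hm
            simp [hm]
          · intro hm
            rcases List.mem_append.1 hm with hm' | hm'
            · rcases List.mem_append.1 hm' with hm'' | hm''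
              · exact hm''
              · exfalso
                have : l0 ∈ eventSet A1 A2 qs q := (hbridge l0).2
                  ⟨hm'', by exact ⟨x, hxY, hform⟩⟩
                rw [hE0] at this
                simp at this
            · exfalso
              rcases hform with rfl | rfl <;> simp at hm'
      · -- nonempty group: find and use the witness exit
        have hEfacts : ∀ l0 ∈ eventSet A1 A2 qs q,
            l0 ∈ utail ∧ l0 ∈ sf ∧ l0 ∉ pf ∧ l0 ∉ ubl ∧ sf.count l0 ≤ 1 ∧
              evpos sf l0 = 1 + (c - w2) ∧ isLetterL l0 = false ∧ l0 ∈ ls1 := by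
          intro l0 hE
          obtain ⟨hl0ut, x, hxY, hform⟩ := (hbridge l0).1 hE
          have hl0u : l0 ∈ (ubl ++ utail) ++ (VLabel.letter σ :: rest) := by simp [hl0ut]
          have hl0ls1 : l0 ∈ ls1 := by rw [← hfull]; exact hl0u
          have hcnt1 : ls1.count l0 ≤ 1 := by
            rcases hform with rfl | rfl
            · exact (hval1 x).1
            · exact (hval1 x).2.1
          have hopls1 : (VLabel.openv x) ∈ ls1 := by
            rcases hform with rfl | rfl
            · exact hl0ls1
            · exact ((hval1 x).2.2.1).2 hl0ls1
          have hevx := hev x hxY hopls1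
          have hl0ls2 : l0 ∈ ls2 := by
            rcases hform with rfl | rfl
            · exact (husedall x hxY).1
            · exact (husedall x hxY).2
          have hcnt2 : ls2.count l0 ≤ 1 := by
            rcases hform with rfl | rfl
            · exact (hval2 x).1
            · exact (hval2 x).2.1
          obtain ⟨a0, b0, hut⟩ := List.append_of_mem hl0ut
          have ha0 : a0.countP isLetterL = 0 :=
            countP_eq_zero_of_all (fun l' hl' => hlf l' (by rw [hut]; simp [hl']))
          have hocc1 : Occ ls1 l0 c := by
            refine ⟨ubl ++ a0, b0 ++ (VLabel.letter σ :: rest), ?_, ?_⟩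
            · rw [← hfull, hut]; simp
            · simp [List.countP_append, hc, ha0]
          have hev1 : evpos ls1 l0 = 1 + c := occ_evpos hocc1 hcnt1
          have hev2 : evpos ls2 l0 = 1 + c := by
            rcases hform with rfl | rfl
            · rw [hevx.1, hev1]
            · rw [hevx.2, hev1]
          have hl0nubl : l0 ∉ ubl := by
            intro hm
            have h1 := count_pos_of_mem hm
            have h2 := count_pos_of_mem hl0ut
            rw [← hfull] at hcnt1
            rw [List.count_append, List.count_append] at hcnt1
            omega
          have hl0npf : l0 ∉ pf := fun hm =>
            hl0nubl ((hiff x hxY l0 hform hl0ls1).1 hm)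
          have hl0sf : l0 ∈ sf := by
            rw [hls2] at hl0ls2
            rcases List.mem_append.1 hl0ls2 with hm | hm
            · exact absurd hm hl0npf
            · exact hm
          have hcntsf : sf.count l0 ≤ 1 := by
            rw [hls2, List.count_append] at hcnt2
            omega
          have hevsf : evpos sf l0 = 1 + (c - w2) := by
            have hh : evpos ls2 l0 = pf.countP isLetterL + evpos sf l0 := by
              rw [hls2, evpos_append_right _ hl0npf]
            rw [hpfcp] at hh
            omega
          have hnl : isLetterL l0 = false := by
            rcases hform with rfl | rfl <;> rfl
          exact ⟨hl0ut, hl0sf, hl0npf, hl0nubl, hcntsf, hevsf, hnl, hl0ls1⟩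
        obtain ⟨e0, he0⟩ := Finset.nonempty_of_ne_empty hE0
        obtain ⟨em, hemE, hmax⟩ := Finset.exists_max_image (eventSet A1 A2 qs q)
          (fun l0 => sf.idxOf l0) ⟨e0, he0⟩
        obtain ⟨hemut, hemsf, hemnpf, hemnubl, hemcnt, hemev, hemnl, hemls1⟩ :=
          hEfacts em hemE
        have hUem := eventSet_unique_target hsync hemE
        obtain ⟨v1, v2, pm, hsfeq, hv1, htr, hv2⟩ := path_split_utgt hsfp hemsf hUem
        have hemnv : em ∉ v1 ∧ em ∉ v2 := not_mem_of_count_le_one (hsfeq ▸ hemcnt)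
        have hv1cp : v1.countP isLetterL = c - w2 := by
          have hoccv1 : Occ sf em (v1.countP isLetterL) := ⟨v1, v2, hsfeq, rfl⟩
          have := occ_evpos hoccv1 hemcnt
          omega
        have hmemv1 : ∀ l0 ∈ eventSet A1 A2 qs q, l0 ≠ em → l0 ∈ v1 := by
          intro l0 hl0E hne
          obtain ⟨-, hl0sf, -, -, hl0cnt, -, -, -⟩ := hEfacts l0 hl0E
          rw [hsfeq] at hl0sf
          by_cases hv1m : l0 ∈ v1
          · exact hv1m
          exfalso
          have hm' : l0 ∈ v2 := by
            rcases List.mem_append.1 hl0sf with hm | hm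
            · exact absurd hm hv1m
            rcases List.mem_cons.1 hm with hm' | hm'
            · exact absurd hm' hne
            · exact hm'
          have hidxem : sf.idxOf em = v1.length := by
            rw [hsfeq, indexOf_append_right _ hemnv.1]
            simp [List.idxOf_cons_self]
          have hbeq : (em == l0) = false := by
            simpa using Ne.symm hne
          have hidxl0 : sf.idxOf l0 = v1.length + (v2.idxOf l0 + 1) := by
            rw [hsfeq, indexOf_append_right _ hv1m, List.idxOf_cons, hbeq, cond_false]
          have hle := hmax l0 hl0E
          omega
        obtain ⟨sa, sb, hv1eq, hsblf, hsacp2, hcrit⟩ := split_letters v1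
        have hemrw : readWord (em :: v2) = readWord v2 := by
          cases em <;> first | rfl | simp [isLetterL] at hemnl
        have hv1rw : readWord v1 = (d.drop w2).take (c - w2) := by
          have h1 : readWord sf = readWord v1 ++ readWord v2 := by
            rw [hsfeq, readWord_append, hemrw]
          have hlenv1 : (readWord v1).length = c - w2 := by rw [readWord_countP, hv1cp]
          have h2 : (readWord v1 ++ readWord v2).take (c - w2) = readWord v1 := by
            rw [← hlenv1, List.take_left]
          rw [← h2, ← h1, hsfrw]
        have hsarw : readWord sa = (d.drop w2).take (c - w2) := by
          have h1 : readWord v1 = readWord sa ++ readWord sb := by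
            rw [hv1eq, readWord_append]
          rw [readWord_eq_nil_of_letterfree hsblf, List.append_nil] at h1
          rw [← h1, hv1rw]
        have hEor : ∀ e' ∈ eventSet A1 A2 qs q, e' = em ∨ e' ∈ sb := by
          intro e' he'
          by_cases hne : e' = em
          · exact Or.inl hne
          right
          have hv1m := hmemv1 e' he' hne
          obtain ⟨-, -, -, -, hcnt', hevsf', hnl', -⟩ := hEfacts e' he'
          obtain ⟨hocc', -⟩ := mem_occ hv1m
          have hevv1 : evpos v1 e' = evpos sf e' := by
            rw [hsfeq, evpos_append_left _ hv1m]
          refine hcrit e' (evpos v1 e' - 1) hocc' ?_ hnl'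
          rw [hsacp2] at *
          omega
        have hGEem : GE A2 d (Nat.unpair (w - 1)) (eventSet A1 A2 qs q) c em := by
          refine ⟨sa, sb, ?_, hsarw, hsblf, hEor⟩
          have hv1' : A2.PathFrom (Nat.unpair (w - 1)).1 (sa ++ sb) pm := by
            rw [← hv1eq]; exact hv1
          exact pathFrom_append hv1' (pathFrom_single htr)
        have hCOem : COany A2 (utgt A2 em) := ⟨v2, qf2, hv2, hqf2⟩
        have hfe : ∃ e ∈ eventSet A1 A2 qs q,
            GE A2 d (Nat.unpair (w - 1)) (eventSet A1 A2 qs q) c e ∧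
              COany A2 (utgt A2 e) := ⟨em, hemE, hGEem, hCOem⟩
        obtain ⟨hcE, hcGE, hcCO⟩ := hfe.choose_spec
        have hce : hfe.choose = em := by
          refine exit_unique hseq2 (eventSet_unique_target hsync hcE) hUem ?_
            ⟨pf, hpf⟩ hcGE hGEem hcE hemE hcCO
          obtain ⟨x, -, hf⟩ := eventSet_form hcE
          exact ⟨x, hf⟩
        have hgw : gstep A1 A2 d c qs q w = 1 + Nat.pair (utgt A2 em) c := by
          rw [gstep, if_neg hw0, if_neg hE0, dif_pos hfe, hce]
        have hwcomp : Nat.unpair (gstep A1 A2 d c qs q w - 1) = (utgt A2 em, c) := by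
          rw [hgw, show 1 + Nat.pair (utgt A2 em) c - 1 = Nat.pair (utgt A2 em) c
            from by omega, Nat.unpair_pair]
        refine ih ((ubl ++ utail) ++ [VLabel.letter σ]) ((ubl ++ utail) ++ [VLabel.letter σ])
          [] (c + 1) q' (gstep A1 A2 d c qs q w) hchk (by simp)
          ?_ (pathFrom_append (pathFrom_append hubl hutail) (pathFrom_single h))
          (.nil q') (by simp) ?_ (by rw [hgw]; omega) ?_ hrF
        · rw [List.append_assoc, List.singleton_append]; exact hfull
        · simp [List.countP_append, List.countP_cons, hc, hlent, isLetterL]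
        · refine ⟨pf ++ (v1 ++ [em]), v2, ?_, ?_, ?_, ?_, ?_, ?_⟩
          · rw [hls2, hsfeq]; simp
          · rw [hwcomp]
            exact pathFrom_append hpf (pathFrom_append hv1 (pathFrom_single htr))
          · rw [hwcomp]; exact hv2
          · rw [hwcomp]
            have hemrw1 : readWord [em] = ([] : List Sig) := by
              cases em <;> first | rfl | simp [isLetterL] at hemnl
            rw [readWord_append, readWord_append, hpfrw, hv1rw, hemrw1, List.append_nil]
            have h2 : w2 + (c - w2) = c := by omega
            rw [← h2, List.take_add]
            have h3 : w2 + (c - w2) - w2 = c - w2 := by omega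
            rw [h3]
          · rw [hwcomp]
            show c ≤ c + 1
            omega
          · intro x hxY l0 hform hl0ls1
            constructor
            · intro hm
              rcases List.mem_append.1 hm with hm' | hm'
              · have := (hiff x hxY l0 hform hl0ls1).1 hm'
                simp [this]
              · rcases List.mem_append.1 hm' with hm'' | hm''
                swap
                · simp only [List.mem_singleton] at hm''
                  subst hm''
                  simp [hemut]
                · by_cases hmu : l0 ∈ ubl ++ utail
                  · rcases List.mem_append.1 hmu with h5 | h5 <;> simp [h5]
                  exfalso
                  have hl0npf : l0 ∉ pf := fun hp =>
                    hmu (by simp [(hiff x hxY l0 hform hl0ls1).1 hp])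
                  have hcnt1 : ls1.count l0 ≤ 1 := by
                    rcases hform with rfl | rfl
                    · exact (hval1 x).1
                    · exact (hval1 x).2.1
                  have hcnt2 : ls2.count l0 ≤ 1 := by
                    rcases hform with rfl | rfl
                    · exact (hval2 x).1
                    · exact (hval2 x).2.1
                  have hopls1 : (VLabel.openv x) ∈ ls1 := by
                    rcases hform with rfl | rfl
                    · exact hl0ls1
                    · exact ((hval1 x).2.2.1).2 hl0ls1
                  have hevx := hev x hxY hopls1
                  have hl0rest' : l0 ∈ rest := by
                    rw [← hfull] at hl0ls1
                    rcases List.mem_append.1 hl0ls1 with hm3 | hm3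
                    · exact absurd hm3 hmu
                    rcases List.mem_cons.1 hm3 with h3 | h3
                    · exfalso; rcases hform with rfl | rfl <;> simp at h3
                    · exact h3
                  obtain ⟨a1, b1, hr1⟩ := List.append_of_mem hl0rest'
                  have hcubl : (ubl ++ utail).countP isLetterL = c := by
                    simp [List.countP_append, hc, hlent]
                  have hoccls1 : Occ ls1 l0 (c + (1 + a1.countP isLetterL)) := by
                    refine ⟨(ubl ++ utail) ++ (VLabel.letter σ :: a1), b1, ?_, ?_⟩
                    · rw [← hfull, hr1]; simp
                    · simp [List.countP_append, List.countP_cons, isLetterL, hc, hlent] <;>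
                        omega
                  have hevls1 : evpos ls1 l0 = 1 + (c + (1 + a1.countP isLetterL)) :=
                    occ_evpos hoccls1 hcnt1
                  have hevls2 : evpos ls2 l0 = evpos ls1 l0 := by
                    rcases hform with rfl | rfl
                    · exact hevx.1
                    · exact hevx.2
                  have hcntv1 : v1.count l0 ≤ 1 := by
                    rw [hls2, hsfeq, List.count_append, List.count_append] at hcnt2
                    omega
                  obtain ⟨hoccv, -⟩ := mem_occ hm''
                  obtain ⟨av, bv, hveq, hkv⟩ := hoccv
                  have hub : av.countP isLetterL ≤ v1.countP isLetterL := by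
                    rw [hveq, List.countP_append]
                    omega
                  have hevv1l0 : evpos v1 l0 = 1 + av.countP isLetterL :=
                    occ_evpos ⟨av, bv, hveq, rfl⟩ hcntv1
                  have heq1 : evpos ls2 l0 = pf.countP isLetterL + evpos sf l0 := by
                    rw [hls2, evpos_append_right _ hl0npf]
                  have heq2 : evpos sf l0 = evpos v1 l0 := by
                    rw [hsfeq, evpos_append_left _ hm'']
                  omega
            · intro hm
              rcases List.mem_append.1 hm with hm' | hm'
              · rcases List.mem_append.1 hm' with hm'' | hm''
                · exact List.mem_append.2
                    (Or.inl ((hiff x hxY l0 hform hl0ls1).2 hm''))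
                · have hE : l0 ∈ eventSet A1 A2 qs q :=
                    (hbridge l0).2 ⟨hm'', x, hxY, hform⟩
                  rcases hEor l0 hE with h3 | h3
                  · subst h3; simp
                  · have : l0 ∈ v1 := by rw [hv1eq]; simp [h3]
                    simp [this]
              · exfalso
                simp only [List.mem_singleton] at hm'
                rcases hform with rfl | rfl <;> simp at hm'


/-- The main characterization. -/
theorem main_equiv (hseq1 : A1.Sequential) (hseq2 : A2.Sequential)
    (hsf : SemiFunctionalForSet A1 (varsOf A1 ∩ varsOf A2))
    (hsync : ∀ x ∈ varsOf A1 ∩ varsOf A2, SyncForVA A2 x)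
    {ls : List (VLabel Sig)} {r s' : ℕ}
    (hT : Trace A1 (chk A1 A2 d) A1.q0 (s0chk A1 A2) ls r s')
    (hr : r ∈ A1.F) (hread : readWord ls = d) :
    AccBad A1 A2 d r s' ↔ ∃ μ2 ∈ vaSem A2 d, Compatible (runMapping ls) μ2 := by
  have hs0 : s0chk A1 A2 = Nat.pair 0 (Nat.pair A1.q0 (1 + Nat.pair A2.q0 0)) := rfl
  have hw1 : 1 + Nat.pair A2.q0 0 - 1 = Nat.pair A2.q0 0 := by omega
  have hval1 : ValidLabels ls := hseq1 ls ⟨r, hT.path, hr⟩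
  constructor
  · intro hbad
    have := sound_aux hseq1 hseq2 hsf hsync hT [] [] [] 0 A1.q0
      (1 + Nat.pair A2.q0 0) hs0 rfl (.nil _) (.nil _) (by simp) rfl
      (by simpa using hread) ?_ hr hbad
    · simpa using this
    · intro hw0
      refine ⟨[], ?_, ?_, ?_, ?_⟩
      · rw [hw1, Nat.unpair_pair]
        exact .nil _
      · rw [hw1, Nat.unpair_pair]
        rfl
      · rw [hw1, Nat.unpair_pair]
      · rintro l k - ⟨a, b, hab, -⟩
        exact absurd hab.symm (by simp)
  · rintro ⟨μ2, ⟨ls2, ⟨qf2, hpath2, hqf2⟩, hread2, hval2, hμeq⟩, hcomp⟩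
    have husedall : ∀ x ∈ Yset A1 A2,
        (VLabel.openv x) ∈ ls2 ∧ (VLabel.closev x) ∈ ls2 := by
      intro x hxY
      have ho : (VLabel.openv x) ∈ ls2 := (mem_Yset.1 hxY).2 ls2 ⟨qf2, hpath2, hqf2⟩
      exact ⟨ho, ((hval2 x).2.2.1).1 ho⟩
    have hev : ∀ x ∈ Yset A1 A2, (VLabel.openv x) ∈ ls →
        evpos ls2 (VLabel.openv x) = evpos ls (VLabel.openv x) ∧
        evpos ls2 (VLabel.closev x) = evpos ls (VLabel.closev x) := by
      intro x hxY hox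
      have h1 : runMapping ls x =
          some (evpos ls (VLabel.openv x), evpos ls (VLabel.closev x)) := by
        simp only [runMapping, if_pos hox]
        rfl
      have h2 : μ2 x =
          some (evpos ls2 (VLabel.openv x), evpos ls2 (VLabel.closev x)) := by
        rw [hμeq]
        simp only [runMapping, if_pos (husedall x hxY).1]
        rfl
      have := hcomp x _ _ h1 h2
      have h3 := congrArg Prod.fst this
      have h4 := congrArg Prod.snd this
      simp only at h3 h4
      exact ⟨h3.symm, h4.symm⟩
    refine complete_aux hseq1 hseq2 hsf hsync ls hval1 hread hqf2 hread2 hval2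
      hev husedall hT [] [] [] 0 A1.q0 (1 + Nat.pair A2.q0 0) hs0 rfl (by simp)
      (.nil _) (.nil _) (by simp) rfl (by omega) ?_ hr
    refine ⟨[], ls2, by simp, ?_, ?_, ?_, ?_, ?_⟩
    · rw [hw1, Nat.unpair_pair]
      exact .nil _
    · rw [hw1, Nat.unpair_pair]
      exact hpath2
    · rw [hw1, Nat.unpair_pair]
      rfl
    · rw [hw1, Nat.unpair_pair]
    · intro x hxY l hform hl
      simp

end Core

end Spanners

namespace Spanners

variable {Sig : Type} [DecidableEq Sig]

theorem statement18 :
    ∃ p : Polynomial ℕ, ∀ (d : List Sig) (A1 A2 : VA Sig),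
      A1.Sequential → A2.Sequential →
      SemiFunctionalForSet A1 (varsOf A1 ∩ varsOf A2) →
      (∀ x ∈ varsOf A1 ∩ varsOf A2, SyncForVA A2 x) →
      ∃ Ad : VA Sig, Ad.Sequential ∧
        vaSem Ad d = diffSet (vaSem A1 d) (vaSem A2 d) ∧
        vaSize Ad ≤
          p.eval (vaSize A1 + vaSize A2 + d.length + (varsOf A1 ∪ varsOf A2).card) := by
  classical
  refine ⟨13 * (Polynomial.X + 1) ^ 5, ?_⟩
  intro d A1 A2 hseq1 hseq2 hsf hsync
  set Acc : ℕ → ℕ → Prop := fun r s => ¬ AccBad A1 A2 d r s with hAccdef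
  have h0 : A1.q0 ∈ statesOf A1 := Finset.mem_insert_self _ _
  have hcl := chk_closure A1 A2 d
  have hs0 := s0chk_mem A1 A2 d h0
  refine ⟨prodVA A1 (chk A1 A2 d) (s0chk A1 A2) (SFchk A1 A2 d) Acc, ?_, ?_, ?_⟩
  · exact prod_sequential hcl hs0 hseq1
  · rw [prod_vaSem hcl hs0]
    ext μ
    simp only [Set.mem_setOf_eq, diffSet]
    constructor
    · rintro ⟨ls, r, s', hT, hr, hAcc, hread, hvalid, rfl⟩
      refine ⟨⟨ls, ⟨r, hT.path, hr⟩, hread, hvalid, rfl⟩, ?_⟩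
      intro μ2 hμ2 hcomp
      exact hAcc ((main_equiv A1 A2 d hseq1 hseq2 hsf hsync hT hr hread).2 ⟨μ2, hμ2, hcomp⟩)
    · rintro ⟨⟨ls, ⟨qf, hpath, hqf⟩, hread, hvalid, rfl⟩, hdiff⟩
      obtain ⟨s', hT⟩ := path_trace (f := chk A1 A2 d) hpath (s0chk A1 A2)
      refine ⟨ls, qf, s', hT, hqf, ?_, hread, hvalid, rfl⟩
      show ¬ AccBad A1 A2 d qf s'
      intro hbad
      obtain ⟨μ2, hμ2, hcomp⟩ :=
        (main_equiv A1 A2 d hseq1 hseq2 hsf hsync hT hqf hread).1 hbad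
      exact hdiff μ2 hμ2 hcomp
  · -- size bound
    set N := vaSize A1 + vaSize A2 + d.length + (varsOf A1 ∪ varsOf A2).card with hN
    have hsz := prod_size (A := A1) (f := chk A1 A2 d) (s0 := s0chk A1 A2)
      (SF := SFchk A1 A2 d) (Acc := Acc)
    have hwcard : (wSet A2 d).card ≤ 1 + (statesOf A2).card * (d.length + 1) := by
      unfold wSet
      refine le_trans (Finset.card_insert_le _ _) ?_
      have := le_trans (Finset.card_image_le
        (f := fun p : ℕ × ℕ => 1 + Nat.pair p.1 p.2)
        (s := statesOf A2 ×ˢ Finset.range (d.length + 1)))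
        (le_of_eq (Finset.card_product _ _))
      simp only [Finset.card_range] at this
      omega
    have hSFcard : (SFchk A1 A2 d).card ≤
        (d.length + 1) * ((statesOf A1).card * (wSet A2 d).card) := by
      unfold SFchk
      refine le_trans Finset.card_image_le ?_
      rw [Finset.card_product, Finset.card_product, Finset.card_range]
    have hQ1 : (statesOf A1).card ≤ N := by
      have : (statesOf A1).card ≤ vaSize A1 := by unfold vaSize; omega
      omega
    have hQ2 : (statesOf A2).card ≤ N := by
      have : (statesOf A2).card ≤ vaSize A2 := by unfold vaSize; omega
      omega
    have hdN : d.length ≤ N := by omega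
    have hA1N : vaSize A1 ≤ N := by omega
    have hSFN : (SFchk A1 A2 d).card ≤ (N + 1) * (N * (1 + N * (N + 1))) := by
      have hw : (wSet A2 d).card ≤ 1 + N * (N + 1) :=
        le_trans hwcard (by
          have := Nat.mul_le_mul hQ2 (Nat.add_le_add_right hdN 1)
          omega)
      refine le_trans hSFcard ?_
      exact Nat.mul_le_mul (by omega) (Nat.mul_le_mul hQ1 hw)
    have hfinal : vaSize (prodVA A1 (chk A1 A2 d) (s0chk A1 A2) (SFchk A1 A2 d) Acc) ≤
        1 + 4 * N * ((N + 1) * (N * (1 + N * (N + 1))) + 1) := by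
      refine le_trans hsz ?_
      have : 4 * vaSize A1 * ((SFchk A1 A2 d).card + 1) ≤
          4 * N * ((N + 1) * (N * (1 + N * (N + 1))) + 1) :=
        Nat.mul_le_mul (Nat.mul_le_mul (le_refl 4) hA1N) (by omega)
      omega
    have heval : (13 * (Polynomial.X + 1) ^ 5 : Polynomial ℕ).eval N = 13 * (N + 1) ^ 5 := by
      simp [Polynomial.eval_mul, Polynomial.eval_pow]
    rw [heval]
    refine le_trans hfinal ?_
    have e1 : (1 : ℕ) ≤ (N + 1) ^ 5 := Nat.one_le_pow _ _ (by omega)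
    have e2 : N ≤ (N + 1) ^ 5 :=
      le_trans (Nat.le_succ N) (Nat.le_self_pow (by omega) _)
    have e3 : (N + 1) * (N * (1 + N * (N + 1))) ≤ (N + 1) ^ 5 := by
      have h1 : N * (1 + N * (N + 1)) ≤ (N + 1) * ((N + 1) * ((N + 1) * (N + 1))) := by
        have : 1 + N * (N + 1) ≤ (N + 1) * ((N + 1) * (N + 1)) := by nlinarith
        exact Nat.mul_le_mul (Nat.le_succ N) (le_trans this (by nlinarith))
      calc (N + 1) * (N * (1 + N * (N + 1)))
          ≤ (N + 1) * ((N + 1) * ((N + 1) * ((N + 1) * (N + 1)))) := by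
            refine Nat.mul_le_mul (le_refl _) ?_
            refine le_trans h1 ?_
            nlinarith
        _ = (N + 1) ^ 5 := by ring
    nlinarith [e1, e2, e3, Nat.zero_le N]

end Spanners
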